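/- Suppose the generator L satisfies the 1-logSob inequality with constant C > 0. Let a, b ≥ 0, t > 0, and let A, B ⊆ Ω with μ(A) = exp(−a²/2) and μ(B) = exp(−b²/2). Then E[1_A · T_t 1_B] ≥ exp( −(1/2) · (a² + 2 e^{−2t/C} a b + b²) / (1 − e^{−4t/C}) ). (Probabilistically: if (X_s) is the reversible Markov chain with semigroup (T_s) started from the stationary measure μ, then P(X_0 ∈ A, X_t ∈ B) is bounded below by this quantity.) -/

import Mathlib

open Real Finset intervalIntegral

noncomputable section

variable {Ω : Type*}

/-- Expectation `E f = ∑ ω, μ ω * f ω`. -/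
def pexp [Fintype Ω] (μ : Ω → ℝ) (f : Ω → ℝ) : ℝ := ∑ ω, μ ω * f ω

/-- Dirichlet form `𝓔(f,g) = E[f · L g]`. -/
def dform [Fintype Ω] (μ : Ω → ℝ) (L : (Ω → ℝ) →ₗ[ℝ] (Ω → ℝ)) (f g : Ω → ℝ) : ℝ :=
  pexp μ fun ω => f ω * L g ω

/-- Entropy `Ent(f) = E[f log f] − (E f) log (E f)`. -/
def entE [Fintype Ω] (μ : Ω → ℝ) (f : Ω → ℝ) : ℝ :=
  pexp μ (fun ω => f ω * Real.log (f ω)) - pexp μ f * Real.log (pexp μ f)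

/-- Variance `Var(f) = E[f²] − (E f)²`. -/
def varE [Fintype Ω] (μ : Ω → ℝ) (f : Ω → ℝ) : ℝ :=
  pexp μ (fun ω => f ω ^ 2) - (pexp μ f) ^ 2

/-- The structural conditions on the Markov generator `L`: `L 1 = 0`, self-adjointness,
positive semidefiniteness, and nonnegativity of `L f` at a global maximum point of `f`. -/
def IsGen [Fintype Ω] (μ : Ω → ℝ) (L : (Ω → ℝ) →ₗ[ℝ] (Ω → ℝ)) : Prop :=
  L (fun _ => 1) = 0 ∧
  (∀ f g, pexp μ (fun ω => f ω * L g ω) = pexp μ (fun ω => g ω * L f ω)) ∧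
  (∀ f, 0 ≤ pexp μ (fun ω => f ω * L f ω)) ∧
  (∀ (f : Ω → ℝ) (ω : Ω), (∀ x, f x ≤ f ω) → 0 ≤ L f ω)

/-- The `p`-logSob inequality with constant `C` (with the conventions for `p = 0` and `p = 1`). -/
def LogSob [Fintype Ω] (μ : Ω → ℝ) (L : (Ω → ℝ) →ₗ[ℝ] (Ω → ℝ)) (p C : ℝ) : Prop :=
  if p = 0 then
    ∀ f : Ω → ℝ, (∀ ω, 0 < f ω) →
      varE μ (fun ω => Real.log (f ω)) ≤ -(C / 2) * dform μ L f (fun ω => (f ω)⁻¹)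
  else if p = 1 then
    ∀ f : Ω → ℝ, (∀ ω, 0 < f ω) →
      entE μ f ≤ C / 4 * dform μ L f (fun ω => Real.log (f ω))
  else
    ∀ f : Ω → ℝ, (∀ ω, 0 < f ω) →
      entE μ (fun ω => f ω ^ p) ≤
        C * p ^ 2 / (4 * (p - 1)) * dform μ L (fun ω => f ω ^ (p - 1)) f

/-- Markov semigroup `T t = e^{-tL}`. -/
def heat [Fintype Ω] (L : (Ω → ℝ) →ₗ[ℝ] (Ω → ℝ)) (t : ℝ) (f : Ω → ℝ) : Ω → ℝ :=
  NormedSpace.exp ((-t) • (LinearMap.toContinuousLinearMap L)) f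

/-- `‖f‖_p` for positive `f` and arbitrary real `p`, with `‖f‖_0 = exp (E log f)`. -/
def pnorm [Fintype Ω] (μ : Ω → ℝ) (p : ℝ) (f : Ω → ℝ) : ℝ :=
  if p = 0 then Real.exp (pexp μ fun ω => Real.log (f ω))
  else (pexp μ fun ω => f ω ^ p) ^ (1 / p)

/-- `‖f‖_p = (E |f|^p)^{1/p}` for real-valued `f`. -/
def pnormAbs [Fintype Ω] (μ : Ω → ℝ) (p : ℝ) (f : Ω → ℝ) : ℝ :=
  (pexp μ fun ω => |f ω| ^ p) ^ (1 / p)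

/-- Hölder conjugate `p' = p/(p-1)`, with the convention `0' = 0`. -/
def hconj (p : ℝ) : ℝ := if p = 0 then 0 else p / (p - 1)

/-- The simple generator `L = Id − E`. -/
def simpleL [Fintype Ω] (μ : Ω → ℝ) : (Ω → ℝ) →ₗ[ℝ] (Ω → ℝ) where
  toFun f := fun ω => f ω - pexp μ f
  map_add' f g := by
    funext ω
    simp only [Pi.add_apply, pexp, mul_add, Finset.sum_add_distrib]
    ring
  map_smul' c f := by
    funext ω
    simp only [Pi.smul_apply, smul_eq_mul, pexp, RingHom.id_apply]
    rw [mul_sub, Finset.mul_sum]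
    congr 1
    exact Finset.sum_congr rfl fun x _ => by ring

set_option linter.unusedSectionVars false
set_option maxHeartbeats 1000000
set_option synthInstance.maxHeartbeats 1000000

lemma exp_mul_intble (r b a : ℝ) :
    IntervalIntegrable (fun s => Real.exp (r * s)) MeasureTheory.volume b a :=
  (Real.continuous_exp.comp (continuous_const.mul continuous_id)).intervalIntegrable _ _

lemma exp_integral_eq {r : ℝ} (hr : r ≠ 0) (a b : ℝ) :
    r * ∫ s in b..a, Real.exp (r * s) = Real.exp (r * a) - Real.exp (r * b) := by
  have hd : ∀ s : ℝ, HasDerivAt (fun x => Real.exp (r * x) / r) (Real.exp (r * s)) s := by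
    intro s
    have h1 : HasDerivAt (fun x : ℝ => r * x) r s := by
      simpa using (hasDerivAt_id s).const_mul r
    have h2 := h1.exp
    have h3 := h2.div_const r
    simpa [mul_comm, mul_div_assoc, mul_div_cancel_left₀ _ hr] using h3
  have := intervalIntegral.integral_eq_sub_of_hasDerivAt (f := fun x => Real.exp (r * x) / r)
    (fun s _ => hd s) (exp_mul_intble r b a)
  rw [this]
  field_simp

lemma cheb_core {p : ℝ} (hp : p ≤ 1) {a b : ℝ} (hab : b ≤ a) :
    (a - b) * ∫ s in b..a, Real.exp (p * s) ≤
      (∫ s in b..a, Real.exp (1 * s)) * (∫ s in b..a, Real.exp ((p - 1) * s)) := by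
  set Ip := ∫ s in b..a, Real.exp (p * s) with hIp
  set E1 := ∫ s in b..a, Real.exp (1 * s) with hE1
  set Im := ∫ s in b..a, Real.exp ((p - 1) * s) with hIm
  have ptw : ∀ s u : ℝ,
      (Real.exp (1 * s) - Real.exp (1 * u)) * (Real.exp ((p - 1) * u) - Real.exp ((p - 1) * s))
        = Real.exp (1 * s) * Real.exp ((p - 1) * u) + Real.exp ((p - 1) * s) * Real.exp (1 * u)
          - (Real.exp (p * s) + Real.exp (p * u)) := by
    intro s u
    have h1 : Real.exp (1 * u) * Real.exp ((p - 1) * u) = Real.exp (p * u) := by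
      rw [← Real.exp_add]; congr 1; ring
    have h2 : Real.exp (1 * s) * Real.exp ((p - 1) * s) = Real.exp (p * s) := by
      rw [← Real.exp_add]; congr 1; ring
    rw [← h1, ← h2]; ring
  have inner_eq : ∀ s : ℝ,
      (∫ u in b..a, (Real.exp (1 * s) - Real.exp (1 * u)) *
        (Real.exp ((p - 1) * u) - Real.exp ((p - 1) * s)))
      = Real.exp (1 * s) * Im + Real.exp ((p - 1) * s) * E1
          - ((a - b) * Real.exp (p * s) + Ip) := by
    intro s
    rw [intervalIntegral.integral_congr (g := fun u =>
      (Real.exp (1 * s) * Real.exp ((p - 1) * u) + Real.exp ((p - 1) * s) * Real.exp (1 * u))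
        - (Real.exp (p * s) + Real.exp (p * u))) (fun u _ => ptw s u)]
    rw [intervalIntegral.integral_sub
      (((exp_mul_intble (p-1) b a).const_mul _).add ((exp_mul_intble 1 b a).const_mul _))
      ((_root_.intervalIntegrable_const).add (exp_mul_intble p b a)),
      intervalIntegral.integral_add
      ((exp_mul_intble (p-1) b a).const_mul _) ((exp_mul_intble 1 b a).const_mul _),
      intervalIntegral.integral_add (_root_.intervalIntegrable_const) (exp_mul_intble p b a),
      intervalIntegral.integral_const_mul, intervalIntegral.integral_const_mul,
      intervalIntegral.integral_const]
    simp only [smul_eq_mul]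
    try ring
  have Jnn : 0 ≤ ∫ s in b..a, (∫ u in b..a, (Real.exp (1 * s) - Real.exp (1 * u)) *
      (Real.exp ((p - 1) * u) - Real.exp ((p - 1) * s))) := by
    refine intervalIntegral.integral_nonneg hab (fun s _ => ?_)
    refine intervalIntegral.integral_nonneg hab (fun u _ => ?_)
    rcases le_total u s with h | h
    · apply mul_nonneg
      · simpa using sub_nonneg.2 (Real.exp_le_exp.2 (by linarith))
      · refine sub_nonneg.2 (Real.exp_le_exp.2 ?_)
        nlinarith
    · have e1 : Real.exp (1 * s) - Real.exp (1 * u) ≤ 0 := by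
        simpa using sub_nonpos.2 (Real.exp_le_exp.2 (by linarith))
      have e2 : Real.exp ((p - 1) * u) - Real.exp ((p - 1) * s) ≤ 0 := by
        refine sub_nonpos.2 (Real.exp_le_exp.2 ?_)
        nlinarith
      nlinarith [mul_nonneg (neg_nonneg.2 e1) (neg_nonneg.2 e2)]
  have Jeq : (∫ s in b..a, (∫ u in b..a, (Real.exp (1 * s) - Real.exp (1 * u)) *
      (Real.exp ((p - 1) * u) - Real.exp ((p - 1) * s))))
      = 2 * (E1 * Im) - 2 * ((a - b) * Ip) := by
    rw [intervalIntegral.integral_congr (g := fun s =>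
      (Real.exp (1 * s) * Im + Real.exp ((p - 1) * s) * E1)
        - ((a - b) * Real.exp (p * s) + Ip)) (fun s _ => inner_eq s)]
    rw [intervalIntegral.integral_sub
      (((exp_mul_intble 1 b a).mul_const _).add ((exp_mul_intble (p-1) b a).mul_const _))
      (((exp_mul_intble p b a).const_mul _).add (_root_.intervalIntegrable_const)),
      intervalIntegral.integral_add
      ((exp_mul_intble 1 b a).mul_const _) ((exp_mul_intble (p-1) b a).mul_const _),
      intervalIntegral.integral_add ((exp_mul_intble p b a).const_mul _) _root_.intervalIntegrable_const,
      intervalIntegral.integral_mul_const, intervalIntegral.integral_mul_const,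
      intervalIntegral.integral_const_mul, intervalIntegral.integral_const]
    simp only [smul_eq_mul]
    ring
  rw [Jeq] at Jnn
  linarith

lemma scalar_core {p : ℝ} (hp1 : p < 1) (hp0 : p ≠ 0) {x y : ℝ} (hx : 0 < x) (hy : 0 < y)
    (hxy : y ≤ x) :
    p * ((Real.exp (p * Real.log x) - Real.exp (p * Real.log y)) * (Real.log x - Real.log y))
      ≤ p ^ 2 / (p - 1) *
        ((Real.exp ((p - 1) * Real.log x) - Real.exp ((p - 1) * Real.log y)) * (x - y)) := by
  set A := Real.log x with hA
  set B := Real.log y with hB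
  have hBA : B ≤ A := Real.log_le_log hy hxy
  have h1 : Real.exp (p * A) - Real.exp (p * B) = p * ∫ s in B..A, Real.exp (p * s) :=
    (exp_integral_eq hp0 A B).symm
  have h2 : Real.exp ((p - 1) * A) - Real.exp ((p - 1) * B)
      = (p - 1) * ∫ s in B..A, Real.exp ((p - 1) * s) :=
    (exp_integral_eq (by linarith) A B).symm
  have h3 : x - y = ∫ s in B..A, Real.exp (1 * s) := by
    have := exp_integral_eq (one_ne_zero) A B
    rw [one_mul] at this
    rw [this, one_mul, one_mul, hA, hB, Real.exp_log hx, Real.exp_log hy]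
  have hcheb := cheb_core hp1.le hBA
  rw [h1, h2, h3]
  have hpne : p - 1 ≠ 0 := by linarith
  have heq : p ^ 2 / (p - 1) * ((p - 1) * (∫ s in B..A, Real.exp ((p - 1) * s)) *
      (∫ s in B..A, Real.exp (1 * s)))
      = p ^ 2 * ((∫ s in B..A, Real.exp (1 * s)) * (∫ s in B..A, Real.exp ((p - 1) * s)))
        * ((p - 1) / (p - 1)) := by ring
  rw [div_self hpne, mul_one] at heq
  calc p * (p * (∫ s in B..A, Real.exp (p * s)) * (A - B))
      = p ^ 2 * ((A - B) * ∫ s in B..A, Real.exp (p * s)) := by ring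
    _ ≤ p ^ 2 * ((∫ s in B..A, Real.exp (1 * s)) * (∫ s in B..A, Real.exp ((p - 1) * s))) := by
        exact mul_le_mul_of_nonneg_left hcheb (sq_nonneg p)
    _ = p ^ 2 / (p - 1) * ((p - 1) * (∫ s in B..A, Real.exp ((p - 1) * s)) *
        (∫ s in B..A, Real.exp (1 * s))) := heq.symm

lemma scalar_ineq {p : ℝ} (hp1 : p < 1) (hp0 : p ≠ 0) {x y : ℝ} (hx : 0 < x) (hy : 0 < y) :
    p * ((Real.exp (p * Real.log x) - Real.exp (p * Real.log y)) * (Real.log x - Real.log y))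
      ≤ p ^ 2 / (p - 1) *
        ((Real.exp ((p - 1) * Real.log x) - Real.exp ((p - 1) * Real.log y)) * (x - y)) := by
  rcases le_total y x with h | h
  · exact scalar_core hp1 hp0 hx hy h
  · have := scalar_core hp1 hp0 hy hx h
    calc p * ((Real.exp (p * Real.log x) - Real.exp (p * Real.log y)) *
        (Real.log x - Real.log y))
        = p * ((Real.exp (p * Real.log y) - Real.exp (p * Real.log x)) *
          (Real.log y - Real.log x)) := by ring
      _ ≤ p ^ 2 / (p - 1) *
          ((Real.exp ((p - 1) * Real.log y) - Real.exp ((p - 1) * Real.log x)) * (y - x)) := this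
      _ = p ^ 2 / (p - 1) *
          ((Real.exp ((p - 1) * Real.log x) - Real.exp ((p - 1) * Real.log y)) * (x - y)) := by
        ring


section Aux

variable [Fintype Ω] [DecidableEq Ω]

lemma pexp_add (μ f g : Ω → ℝ) :
    pexp μ (fun ω => f ω + g ω) = pexp μ f + pexp μ g := by
  simp only [pexp, mul_add, Finset.sum_add_distrib]

lemma pexp_sub (μ f g : Ω → ℝ) :
    pexp μ (fun ω => f ω - g ω) = pexp μ f - pexp μ g := by
  simp only [pexp, mul_sub, Finset.sum_sub_distrib]

lemma pexp_cmul (μ : Ω → ℝ) (c : ℝ) (f : Ω → ℝ) :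
    pexp μ (fun ω => c * f ω) = c * pexp μ f := by
  simp only [pexp, Finset.mul_sum]
  exact Finset.sum_congr rfl fun x _ => by ring

lemma pexp_mono (μ : Ω → ℝ) (hμ : ∀ ω, 0 ≤ μ ω) {f g : Ω → ℝ} (h : ∀ ω, f ω ≤ g ω) :
    pexp μ f ≤ pexp μ g :=
  Finset.sum_le_sum fun ω _ => mul_le_mul_of_nonneg_left (h ω) (hμ ω)

lemma pexp_const (μ : Ω → ℝ) (hμ1 : ∑ ω, μ ω = 1) (c : ℝ) :
    pexp μ (fun _ => c) = c := by
  simp only [pexp]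
  rw [← Finset.sum_mul, hμ1, one_mul]

lemma univ_nonempty_of_sum (μ : Ω → ℝ) (hμ1 : ∑ ω, μ ω = 1) :
    (Finset.univ : Finset Ω).Nonempty := by
  rcases Finset.eq_empty_or_nonempty (Finset.univ : Finset Ω) with h | h
  · rw [h, Finset.sum_empty] at hμ1; norm_num at hμ1
  · exact h

lemma pexp_pos (μ : Ω → ℝ) (hμpos : ∀ ω, 0 < μ ω) (hμ1 : ∑ ω, μ ω = 1)
    {f : Ω → ℝ} (hf : ∀ ω, 0 < f ω) : 0 < pexp μ f :=
  Finset.sum_pos (fun ω _ => mul_pos (hμpos ω) (hf ω)) (univ_nonempty_of_sum μ hμ1)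

lemma pexp_nonneg (μ : Ω → ℝ) (hμpos : ∀ ω, 0 ≤ μ ω)
    {f : Ω → ℝ} (hf : ∀ ω, 0 ≤ f ω) : 0 ≤ pexp μ f :=
  Finset.sum_nonneg fun ω _ => mul_nonneg (hμpos ω) (hf ω)

/-- point mass indicator -/
def ind (ω' : Ω) : Ω → ℝ := fun x => if x = ω' then 1 else 0

variable (μ : Ω → ℝ) (L : (Ω → ℝ) →ₗ[ℝ] (Ω → ℝ))

lemma L_rep (h : Ω → ℝ) (ω : Ω) : L h ω = ∑ ω', h ω' * L (ind ω') ω := by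
  have : h = ∑ ω' : Ω, h ω' • ind ω' := by
    funext x
    simp [ind, Finset.sum_apply, Finset.sum_ite_eq', smul_eq_mul]
  conv_lhs => rw [this]
  rw [map_sum]
  simp [Finset.sum_apply, smul_eq_mul]

lemma L_offdiag (hL : IsGen μ L) {ω ω' : Ω} (h : ω ≠ ω') : L (ind ω') ω ≤ 0 := by
  have := hL.2.2.2 (fun x => -(ind ω' x)) ω (fun x => by
    simp only [ind, neg_le_neg_iff]
    by_cases hx : x = ω' <;> simp [hx, h])
  have h2 : L (fun x => -(ind ω' x)) ω = -(L (ind ω') ω) := by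
    have : (fun x => -(ind ω' x)) = -(ind ω') := rfl
    rw [this, map_neg]; rfl
  linarith [this, h2 ▸ this]

lemma L_rowsum (hL : IsGen μ L) (ω : Ω) : ∑ ω', L (ind ω') ω = 0 := by
  have h1 : (fun _ : Ω => (1:ℝ)) = ∑ ω' : Ω, ind ω' := by
    funext x; simp [ind, Finset.sum_apply, Finset.sum_ite_eq']
  have := congrFun (hL.1) ω
  rw [h1, map_sum] at this
  simpa [Finset.sum_apply] using this

lemma L_symm (hL : IsGen μ L) (ω ω' : Ω) :
    μ ω * L (ind ω') ω = μ ω' * L (ind ω) ω' := by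
  have := hL.2.1 (ind ω) (ind ω')
  simp only [pexp, ind] at this
  rw [Finset.sum_eq_single ω (fun b _ hb => by simp [hb]) (by simp),
      Finset.sum_eq_single ω' (fun b _ hb => by simp [hb]) (by simp)] at this
  simpa using this

lemma dform_edge (hL : IsGen μ L) (f g : Ω → ℝ) :
    dform μ L f g = (1/2) * ∑ ω, ∑ ω',
      (-(μ ω * L (ind ω') ω)) * ((f ω - f ω') * (g ω - g ω')) := by
  have key : ∀ ω ω', (-(μ ω * L (ind ω') ω)) * ((f ω - f ω') * (g ω - g ω'))
      = -(μ ω * L (ind ω') ω * (f ω * g ω)) + (μ ω * L (ind ω') ω * (f ω * g ω'))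
        + (μ ω * L (ind ω') ω * (f ω' * g ω)) - (μ ω * L (ind ω') ω * (f ω' * g ω')) := by
    intro ω ω'; ring
  have S1 : ∑ ω, ∑ ω', μ ω * L (ind ω') ω * (f ω * g ω) = 0 := by
    refine Finset.sum_eq_zero fun ω _ => ?_
    rw [← Finset.sum_mul, ← Finset.mul_sum, L_rowsum μ L hL]
    · ring
  have S4 : ∑ ω, ∑ ω', μ ω * L (ind ω') ω * (f ω' * g ω') = 0 := by
    rw [Finset.sum_comm]
    refine Finset.sum_eq_zero fun ω' _ => ?_
    have : ∀ ω, μ ω * L (ind ω') ω * (f ω' * g ω')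
        = μ ω' * L (ind ω) ω' * (f ω' * g ω') := fun ω => by rw [L_symm μ L hL ω ω']
    rw [Finset.sum_congr rfl fun ω _ => this ω]
    rw [← Finset.sum_mul]
    rw [show ∑ ω, μ ω' * L (ind ω) ω' = μ ω' * ∑ ω, L (ind ω) ω' from by
      rw [Finset.mul_sum]]
    rw [L_rowsum μ L hL]
    ring
  have S3 : ∑ ω, ∑ ω', μ ω * L (ind ω') ω * (f ω' * g ω)
      = dform μ L f g := by
    rw [Finset.sum_comm]
    have : ∀ ω' ω, μ ω * L (ind ω') ω * (f ω' * g ω)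
        = μ ω' * (f ω' * (L (ind ω) ω' * g ω)) := fun ω' ω => by
      rw [show μ ω * L (ind ω') ω * (f ω' * g ω) = (μ ω * L (ind ω') ω) * (f ω' * g ω) from by ring,
          L_symm μ L hL ω ω']; ring
    rw [Finset.sum_congr rfl fun ω' _ => Finset.sum_congr rfl fun ω _ => this ω' ω]
    simp only [dform, pexp]
    refine Finset.sum_congr rfl fun ω' _ => ?_
    rw [← Finset.mul_sum, ← Finset.mul_sum]
    congr 1
    rw [L_rep L g ω']
    congr 1
    exact Finset.sum_congr rfl fun ω _ => by ring
  have S2 : ∑ ω, ∑ ω', μ ω * L (ind ω') ω * (f ω * g ω')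
      = dform μ L f g := by
    simp only [dform, pexp]
    refine Finset.sum_congr rfl fun ω _ => ?_
    rw [L_rep L g ω, Finset.mul_sum, Finset.mul_sum]
    exact Finset.sum_congr rfl fun ω' _ => by ring
  rw [Finset.sum_congr rfl fun ω _ => Finset.sum_congr rfl fun ω' _ => key ω ω']
  simp only [Finset.sum_add_distrib, Finset.sum_sub_distrib, Finset.sum_neg_distrib]
  rw [S1, S2, S3, S4]
  ring

lemma dform_comparison (hμpos : ∀ ω, 0 < μ ω) (hL : IsGen μ L) {f g f' g' : Ω → ℝ}
    (h : ∀ ω ω', ω ≠ ω' → (f ω - f ω') * (g ω - g ω') ≤ (f' ω - f' ω') * (g' ω - g' ω')) :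
    dform μ L f g ≤ dform μ L f' g' := by
  rw [dform_edge μ L hL, dform_edge μ L hL]
  have : ∀ ω ω', (-(μ ω * L (ind ω') ω)) * ((f ω - f ω') * (g ω - g ω'))
      ≤ (-(μ ω * L (ind ω') ω)) * ((f' ω - f' ω') * (g' ω - g' ω')) := by
    intro ω ω'
    rcases eq_or_ne ω ω' with rfl | hne
    · simp
    · exact mul_le_mul_of_nonneg_left (h ω ω' hne)
        (by
          have := L_offdiag μ L hL hne
          have := (hμpos ω).le
          nlinarith)
  have hsum := Finset.sum_le_sum (fun ω (_ : ω ∈ Finset.univ) =>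
    Finset.sum_le_sum (fun ω' (_ : ω' ∈ Finset.univ) => this ω ω'))
  linarith

lemma dform_cmul_left (c : ℝ) (f g : Ω → ℝ) :
    dform μ L (fun ω => c * f ω) g = c * dform μ L f g := by
  simp only [dform]
  rw [← pexp_cmul]
  congr 1; funext ω; ring

lemma dform_cmul_right (c : ℝ) (f g : Ω → ℝ) :
    dform μ L f (fun ω => c * g ω) = c * dform μ L f g := by
  simp only [dform]
  have : (fun ω => c * g ω) = c • g := rfl
  rw [this, map_smul]
  rw [← pexp_cmul]
  congr 1; funext ω; simp [smul_eq_mul]; ring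

end Aux


section PlogSob

variable [Fintype Ω] [DecidableEq Ω] (μ : Ω → ℝ) (L : (Ω → ℝ) →ₗ[ℝ] (Ω → ℝ))

lemma plogSob (hμpos : ∀ ω, 0 < μ ω) (hL : IsGen μ L) {C : ℝ} (hC : 0 ≤ C)
    (hLS : LogSob μ L 1 C) {u : Ω → ℝ} (hu : ∀ ω, 0 < u ω) {p : ℝ} (hp1 : p < 1) (hp0 : p ≠ 0) :
    entE μ (fun ω => Real.exp (p * Real.log (u ω))) ≤
      C * p ^ 2 / (4 * (p - 1)) * dform μ L (fun ω => Real.exp ((p - 1) * Real.log (u ω))) u := by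
  have hLS1 : ∀ f : Ω → ℝ, (∀ ω, 0 < f ω) →
      entE μ f ≤ C / 4 * dform μ L f (fun ω => Real.log (f ω)) := by
    simpa [LogSob] using hLS
  set v : Ω → ℝ := fun ω => Real.exp (p * Real.log (u ω)) with hv
  have hvpos : ∀ ω, 0 < v ω := fun ω => Real.exp_pos _
  have h1 := hLS1 v hvpos
  have hlogv : (fun ω => Real.log (v ω)) = fun ω => p * Real.log (u ω) := by
    funext ω; simp [hv, Real.log_exp]
  rw [hlogv, dform_cmul_right μ L p v (fun ω => Real.log (u ω))] at h1
  have comp : p * dform μ L v (fun ω => Real.log (u ω))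
      ≤ p ^ 2 / (p - 1) * dform μ L (fun ω => Real.exp ((p - 1) * Real.log (u ω))) u := by
    rw [← dform_cmul_left μ L p v (fun ω => Real.log (u ω)),
      ← dform_cmul_left μ L (p ^ 2 / (p - 1))
        (fun ω => Real.exp ((p - 1) * Real.log (u ω))) u]
    refine dform_comparison μ L hμpos hL (fun ω ω' _ => ?_)
    have key := scalar_ineq hp1 hp0 (hu ω) (hu ω')
    calc (p * v ω - p * v ω') * (Real.log (u ω) - Real.log (u ω'))
        = p * ((Real.exp (p * Real.log (u ω)) - Real.exp (p * Real.log (u ω'))) *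
            (Real.log (u ω) - Real.log (u ω'))) := by simp only [hv]; ring
      _ ≤ p ^ 2 / (p - 1) * ((Real.exp ((p - 1) * Real.log (u ω)) -
            Real.exp ((p - 1) * Real.log (u ω'))) * (u ω - u ω')) := key
      _ = (p ^ 2 / (p - 1) * Real.exp ((p - 1) * Real.log (u ω)) -
            p ^ 2 / (p - 1) * Real.exp ((p - 1) * Real.log (u ω'))) * (u ω - u ω') := by ring
  set D := dform μ L (fun ω => Real.exp ((p - 1) * Real.log (u ω))) u with hD
  calc entE μ v ≤ C / 4 * (p * dform μ L v (fun ω => Real.log (u ω))) := h1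
    _ ≤ C / 4 * (p ^ 2 / (p - 1) * D) := mul_le_mul_of_nonneg_left comp (by linarith)
    _ = C * p ^ 2 / (4 * (p - 1)) * D := by
        have hpne : p - 1 ≠ 0 := by linarith
        field_simp

end PlogSob

section Heat

variable [Fintype Ω] [DecidableEq Ω] (μ : Ω → ℝ) (L : (Ω → ℝ) →ₗ[ℝ] (Ω → ℝ))

/-- evaluation of an operator at a function and a point, as a CLM -/
def evCLM (g : Ω → ℝ) (ω : Ω) : ((Ω → ℝ) →L[ℝ] (Ω → ℝ)) →L[ℝ] ℝ :=
  (ContinuousLinearMap.proj ω).comp (ContinuousLinearMap.apply ℝ (Ω → ℝ) g)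

@[simp] lemma evCLM_apply (g : Ω → ℝ) (ω : Ω) (T : (Ω → ℝ) →L[ℝ] (Ω → ℝ)) :
    evCLM g ω T = T g ω := rfl

lemma heat_hasDerivAt (g : Ω → ℝ) (ω : Ω) (s : ℝ) :
    HasDerivAt (fun s => heat L s g ω) (-(L (heat L s g) ω)) s := by
  have h := hasDerivAt_exp_smul_const' (𝕂 := ℝ)
    (LinearMap.toContinuousLinearMap L) (-s)
  have h2 := (evCLM g ω).hasFDerivAt.comp_hasDerivAt (-s) h
  have hneg : HasDerivAt (fun u : ℝ => -u) (-1) s := (hasDerivAt_id s).neg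
  have h4 := h2.comp s hneg
  have hfun : ((fun u : ℝ => evCLM g ω
      (NormedSpace.exp (u • (LinearMap.toContinuousLinearMap L)))) ∘ (fun u : ℝ => -u))
      = fun u : ℝ => heat L u g ω := by
    funext u; rfl
  have hval : evCLM g ω ((LinearMap.toContinuousLinearMap L) *
      NormedSpace.exp ((-s) • (LinearMap.toContinuousLinearMap L))) * (-1)
      = -(L (heat L s g) ω) := by
    rw [evCLM_apply, ContinuousLinearMap.mul_apply]
    have : (NormedSpace.exp ((-s) • (LinearMap.toContinuousLinearMap L))) g
        = heat L s g := rfl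
    rw [this]
    simp
  rw [← hfun, ← hval]
  exact h4

/-- bound for the diagonal entries of `L` -/
def cbd : ℝ := ∑ ω, |L (ind ω) ω|

/-- `cbd • 1 - L`, a positivity-preserving operator -/
def Mop : (Ω → ℝ) →L[ℝ] (Ω → ℝ) :=
  cbd L • (1 : (Ω → ℝ) →L[ℝ] (Ω → ℝ)) - LinearMap.toContinuousLinearMap L

lemma Mop_nonneg (hL : IsGen μ L) {h : Ω → ℝ} (hh : ∀ ω, 0 ≤ h ω) (ω : Ω) :
    0 ≤ Mop L h ω := by
  have h0 : Mop L h ω = cbd L * h ω - L h ω := by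
    simp [Mop, ContinuousLinearMap.sub_apply, ContinuousLinearMap.smul_apply]
  have h1 : L h ω = h ω * L (ind ω) ω + ∑ ω' ∈ Finset.univ.erase ω, h ω' * L (ind ω') ω := by
    rw [L_rep L h ω, ← Finset.add_sum_erase Finset.univ _ (Finset.mem_univ ω)]
  have h2 : L (ind ω) ω ≤ cbd L := by
    refine le_trans (le_abs_self _) ?_
    show |L (ind ω) ω| ≤ ∑ ω', |L (ind ω') ω'|
    exact Finset.single_le_sum (f := fun ω' => |L (ind ω') ω'|)
      (fun ω' _ => abs_nonneg _) (Finset.mem_univ ω)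
  have h3 : ∑ ω' ∈ Finset.univ.erase ω, h ω' * L (ind ω') ω ≤ 0 := by
    refine Finset.sum_nonpos fun ω' hω' => ?_
    have hne : ω ≠ ω' := fun he => (Finset.mem_erase.1 hω').1 he.symm
    exact mul_nonpos_of_nonneg_of_nonpos (hh ω') (L_offdiag μ L hL hne)
  nlinarith [hh ω]

lemma Mop_pow_nonneg (hL : IsGen μ L) : ∀ (n : ℕ) (h : Ω → ℝ), (∀ ω, 0 ≤ h ω) →
    ∀ ω, 0 ≤ ((Mop L) ^ n) h ω := by
  intro n
  induction n with
  | zero => intro h hh ω; simpa using hh ω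
  | succ k ih =>
    intro h hh ω
    rw [pow_succ']
    exact Mop_nonneg μ L hL (fun ω' => ih h hh ω') ω

lemma exp_apply_eq_tsum (T : (Ω → ℝ) →L[ℝ] (Ω → ℝ)) (g : Ω → ℝ) (ω : Ω) :
    NormedSpace.exp T g ω = ∑' n : ℕ, ((n.factorial : ℝ))⁻¹ * ((T ^ n) g ω) := by
  have h1 : NormedSpace.exp T g ω = evCLM g ω (NormedSpace.exp T) := rfl
  rw [h1, NormedSpace.exp_eq_tsum ℝ,
    ContinuousLinearMap.map_tsum (evCLM g ω) (NormedSpace.expSeries_summable' T)]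
  refine tsum_congr fun n => ?_
  simp [smul_eq_mul]

lemma summable_exp_terms (T : (Ω → ℝ) →L[ℝ] (Ω → ℝ)) (g : Ω → ℝ) (ω : Ω) :
    Summable (fun n : ℕ => ((n.factorial : ℝ))⁻¹ * ((T ^ n) g ω)) := by
  have h1 := NormedSpace.expSeries_summable' (𝕂 := ℝ) T
  have h2 := h1.map ((evCLM g ω).toLinearMap.toAddMonoidHom) (evCLM g ω).continuous
  refine h2.congr fun n => ?_
  simp [Function.comp, smul_eq_mul]

lemma exp_smul_one (c : ℝ) :
    NormedSpace.exp (c • (1 : (Ω → ℝ) →L[ℝ] (Ω → ℝ)))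
      = Real.exp c • (1 : (Ω → ℝ) →L[ℝ] (Ω → ℝ)) := by
  rw [NormedSpace.exp_eq_tsum ℝ]
  show (∑' n : ℕ, ((n.factorial : ℝ))⁻¹ • (c • (1 : (Ω → ℝ) →L[ℝ] (Ω → ℝ))) ^ n)
      = Real.exp c • (1 : (Ω → ℝ) →L[ℝ] (Ω → ℝ))
  have h1 : ∀ n : ℕ, ((n.factorial : ℝ))⁻¹ • (c • (1 : (Ω → ℝ) →L[ℝ] (Ω → ℝ))) ^ n
      = (c ^ n / (n.factorial : ℝ)) • (1 : (Ω → ℝ) →L[ℝ] (Ω → ℝ)) := by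
    intro n
    rw [smul_pow, one_pow, smul_smul]
    congr 1
    ring
  rw [tsum_congr h1, Summable.tsum_smul_const (Real.summable_pow_div_factorial c)]
  congr 1
  rw [Real.exp_eq_exp_ℝ, NormedSpace.exp_eq_tsum_div]

lemma heat_lower (hL : IsGen μ L) {s : ℝ} (hs : 0 ≤ s) {g : Ω → ℝ} (hg : ∀ ω, 0 ≤ g ω)
    (ω : Ω) : Real.exp (-(s * cbd L)) * g ω ≤ heat L s g ω := by
  have hsplit : ((-s) • (LinearMap.toContinuousLinearMap L))
      = (-(s * cbd L)) • (1 : (Ω → ℝ) →L[ℝ] (Ω → ℝ)) + s • Mop L := by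
    refine ContinuousLinearMap.ext fun f => ?_
    funext x
    simp only [Mop, ContinuousLinearMap.smul_apply, ContinuousLinearMap.add_apply,
      ContinuousLinearMap.sub_apply, ContinuousLinearMap.one_apply, Pi.smul_apply,
      Pi.add_apply, Pi.sub_apply, smul_eq_mul]
    ring
  have hcomm : Commute ((-(s * cbd L)) • (1 : (Ω → ℝ) →L[ℝ] (Ω → ℝ))) (s • Mop L) :=
    Commute.smul_left (Commute.smul_right (Commute.one_left _) s) _
  have hh : heat L s g ω = Real.exp (-(s * cbd L)) * (NormedSpace.exp (s • Mop L) g ω) := by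
    show (NormedSpace.exp ((-s) • (LinearMap.toContinuousLinearMap L))) g ω = _
    rw [hsplit, NormedSpace.exp_add_of_commute_of_mem_ball (𝕂 := ℝ) hcomm
      ((NormedSpace.expSeries_radius_eq_top ℝ ((Ω → ℝ) →L[ℝ] (Ω → ℝ))).symm ▸ edist_lt_top _ _)
      ((NormedSpace.expSeries_radius_eq_top ℝ ((Ω → ℝ) →L[ℝ] (Ω → ℝ))).symm ▸ edist_lt_top _ _), exp_smul_one, smul_mul_assoc, one_mul]
    simp [ContinuousLinearMap.smul_apply]
  rw [hh]
  have hterm : ∀ n : ℕ, 0 ≤ ((n.factorial : ℝ))⁻¹ * (((s • Mop L) ^ n) g ω) := by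
    intro n
    refine mul_nonneg (by positivity) ?_
    rw [smul_pow]
    have := Mop_pow_nonneg μ L hL n g hg ω
    simp only [ContinuousLinearMap.smul_apply, Pi.smul_apply, smul_eq_mul]
    exact mul_nonneg (pow_nonneg hs n) this
  have hlow : g ω ≤ NormedSpace.exp (s • Mop L) g ω := by
    rw [exp_apply_eq_tsum]
    have h0 : (((0:ℕ).factorial : ℝ))⁻¹ * ((((s • Mop L)) ^ 0) g ω) = g ω := by simp
    rw [← h0]
    exact Summable.le_tsum (summable_exp_terms (s • Mop L) g ω) 0 (fun j _ => hterm j)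
  exact mul_le_mul_of_nonneg_left hlow (Real.exp_pos _).le

lemma heat_nonneg (hL : IsGen μ L) {s : ℝ} (hs : 0 ≤ s) {g : Ω → ℝ} (hg : ∀ ω, 0 ≤ g ω)
    (ω : Ω) : 0 ≤ heat L s g ω :=
  le_trans (mul_nonneg (Real.exp_pos _).le (hg ω)) (heat_lower μ L hL hs hg ω)

lemma heat_pos (hL : IsGen μ L) {s : ℝ} (hs : 0 ≤ s) {g : Ω → ℝ} (hg : ∀ ω, 0 < g ω)
    (ω : Ω) : 0 < heat L s g ω :=
  lt_of_lt_of_le (mul_pos (Real.exp_pos _) (hg ω))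
    (heat_lower μ L hL hs (fun ω' => (hg ω').le) ω)

lemma heat_one (hL : IsGen μ L) (s : ℝ) (ω : Ω) : heat L s (fun _ => (1:ℝ)) ω = 1 := by
  have hA1 : (LinearMap.toContinuousLinearMap L) (fun _ : Ω => (1:ℝ)) = 0 := by
    simp [hL.1]
  have hT1 : (((-s) • (LinearMap.toContinuousLinearMap L))) (fun _ : Ω => (1:ℝ)) = 0 := by
    simp [hA1, hL.1]
  have hTn : ∀ n : ℕ, n ≠ 0 →
      ((((-s) • (LinearMap.toContinuousLinearMap L))) ^ n) (fun _ : Ω => (1:ℝ)) = 0 := by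
    intro n hn
    obtain ⟨k, rfl⟩ := Nat.exists_eq_succ_of_ne_zero hn
    rw [pow_succ, ContinuousLinearMap.mul_apply, hT1, map_zero]
  show (NormedSpace.exp ((-s) • (LinearMap.toContinuousLinearMap L))) (fun _ => (1:ℝ)) ω = 1
  rw [exp_apply_eq_tsum]
  rw [tsum_eq_single 0 (fun n hn => by rw [hTn n hn]; simp)]
  simp

/-- `pexp` as a continuous linear map -/
def pexpCLM : (Ω → ℝ) →L[ℝ] ℝ :=
  LinearMap.toContinuousLinearMap
    { toFun := fun f => pexp μ f
      map_add' := fun f g => pexp_add μ f g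
      map_smul' := fun c f => by
        simp only [RingHom.id_apply, smul_eq_mul]
        rw [← pexp_cmul μ c f]; rfl }

@[simp] lemma pexpCLM_apply (f : Ω → ℝ) : pexpCLM μ f = pexp μ f := rfl

lemma pexp_L_zero (hL : IsGen μ L) (h : Ω → ℝ) : pexp μ (L h) = 0 := by
  have h1 := hL.2.1 (fun _ => 1) h
  have h2 : (fun ω => (fun _ : Ω => (1:ℝ)) ω * L h ω) = L h := by funext ω; simp
  have h3 : (fun ω => h ω * L (fun _ => (1:ℝ)) ω) = fun _ => (0:ℝ) := by
    funext ω; rw [hL.1]; simp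
  rw [h2, h3] at h1
  rw [h1]
  simp [pexp]

lemma pexp_heat (hL : IsGen μ L) (s : ℝ) (g : Ω → ℝ) :
    pexp μ (heat L s g) = pexp μ g := by
  set T := ((-s) • (LinearMap.toContinuousLinearMap L)) with hT
  have hker : ∀ h : Ω → ℝ, pexp μ (T h) = 0 := by
    intro h
    have : T h = fun ω => (-s) * (L h ω) := by
      funext ω; simp [hT, ContinuousLinearMap.smul_apply]
    rw [this, pexp_cmul μ (-s) (fun ω => L h ω)]
    have : (fun ω => L h ω) = L h := rfl
    rw [this, pexp_L_zero μ L hL]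
    ring
  have h1 : pexp μ (heat L s g) = pexpCLM μ (NormedSpace.exp T g) := rfl
  have h2 : pexpCLM μ (NormedSpace.exp T g)
      = ((pexpCLM μ).comp (ContinuousLinearMap.apply ℝ (Ω → ℝ) g)) (NormedSpace.exp T) := rfl
  rw [h1, h2, NormedSpace.exp_eq_tsum ℝ,
    ContinuousLinearMap.map_tsum _ (NormedSpace.expSeries_summable' T)]
  have hterm : ∀ n : ℕ, n ≠ 0 →
      ((pexpCLM μ).comp (ContinuousLinearMap.apply ℝ (Ω → ℝ) g))
        (((n.factorial : ℝ))⁻¹ • T ^ n) = 0 := by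
    intro n hn
    obtain ⟨k, rfl⟩ := Nat.exists_eq_succ_of_ne_zero hn
    rw [map_smul]
    have : ((pexpCLM μ).comp (ContinuousLinearMap.apply ℝ (Ω → ℝ) g)) (T ^ (k + 1))
        = pexp μ (T ((T ^ k) g)) := by
      simp only [ContinuousLinearMap.comp_apply, ContinuousLinearMap.apply_apply, pexpCLM_apply]
      rw [pow_succ']
      rfl
    rw [this, hker, smul_zero]
  rw [tsum_eq_single 0 hterm]
  simp

end Heat


section Bounds

variable [Fintype Ω] [DecidableEq Ω] (μ : Ω → ℝ) (L : (Ω → ℝ) →ₗ[ℝ] (Ω → ℝ))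

lemma heat_le_max (hL : IsGen μ L) {s : ℝ} (hs : 0 ≤ s) (g : Ω → ℝ)
    (hne : (Finset.univ : Finset Ω).Nonempty) (ω : Ω) :
    heat L s g ω ≤ Finset.univ.sup' hne g := by
  set c := Finset.univ.sup' hne g with hc
  have hnn : ∀ x, 0 ≤ (fun x => c - g x) x := fun x =>
    sub_nonneg.2 (Finset.le_sup' g (Finset.mem_univ x))
  have h1 := heat_nonneg μ L hL hs hnn ω
  have hrw : heat L s (fun x => c - g x) ω
      = c * heat L s (fun _ => (1:ℝ)) ω - heat L s g ω := by
    have hfe : (fun x => c - g x) = (c • (fun _ : Ω => (1:ℝ)) - g) := by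
      funext x; simp [smul_eq_mul]
    rw [hfe]
    show (NormedSpace.exp ((-s) • (LinearMap.toContinuousLinearMap L)))
      (c • (fun _ : Ω => (1:ℝ)) - g) ω = _
    rw [map_sub, map_smul]
    simp only [Pi.sub_apply, Pi.smul_apply, smul_eq_mul]
    rfl
  rw [hrw, heat_one μ L hL s ω] at h1
  linarith

lemma heat_ge_min (hL : IsGen μ L) {s : ℝ} (hs : 0 ≤ s) (g : Ω → ℝ)
    (hne : (Finset.univ : Finset Ω).Nonempty) (ω : Ω) :
    Finset.univ.inf' hne g ≤ heat L s g ω := by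
  set c := Finset.univ.inf' hne g with hc
  have hnn : ∀ x, 0 ≤ (fun x => g x - c) x := fun x =>
    sub_nonneg.2 (Finset.inf'_le g (Finset.mem_univ x))
  have h1 := heat_nonneg μ L hL hs hnn ω
  have hrw : heat L s (fun x => g x - c) ω
      = heat L s g ω - c * heat L s (fun _ => (1:ℝ)) ω := by
    have hfe : (fun x => g x - c) = (g - c • (fun _ : Ω => (1:ℝ))) := by
      funext x; simp [smul_eq_mul]
    rw [hfe]
    show (NormedSpace.exp ((-s) • (LinearMap.toContinuousLinearMap L)))
      (g - c • (fun _ : Ω => (1:ℝ))) ω = _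
    rw [map_sub, map_smul]
    simp only [Pi.sub_apply, Pi.smul_apply, smul_eq_mul]
    rfl
  rw [hrw, heat_one μ L hL s ω] at h1
  linarith

lemma log_heat_bound (hL : IsGen μ L) {s : ℝ} (hs : 0 ≤ s) {g : Ω → ℝ} (hg : ∀ ω, 0 < g ω)
    (hne : (Finset.univ : Finset Ω).Nonempty) (ω : Ω) :
    |Real.log (heat L s g ω)| ≤
      max |Real.log (Finset.univ.inf' hne g)| |Real.log (Finset.univ.sup' hne g)| := by
  have hmin : 0 < Finset.univ.inf' hne g := by
    obtain ⟨ω1, _, hω1⟩ := Finset.exists_mem_eq_inf' hne g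
    rw [hω1]; exact hg ω1
  have h1 := heat_ge_min μ L hL hs g hne ω
  have h2 := heat_le_max μ L hL hs g hne ω
  have hpos : 0 < heat L s g ω := lt_of_lt_of_le hmin h1
  rw [abs_le]
  constructor
  · have := Real.log_le_log hmin h1
    have habs : -|Real.log (Finset.univ.inf' hne g)| ≤ Real.log (Finset.univ.inf' hne g) :=
      neg_abs_le _
    have : -|Real.log (Finset.univ.inf' hne g)| ≤ Real.log (heat L s g ω) := by linarith
    exact le_trans (neg_le_neg (le_max_left _ _)) this
  · have := Real.log_le_log hpos h2
    exact le_trans (le_trans this (le_abs_self _)) (le_max_right _ _)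

end Bounds

section RevHolder

variable [Fintype Ω] [DecidableEq Ω] (μ : Ω → ℝ)

lemma rev_holder (hμpos : ∀ ω, 0 < μ ω) (hμ1 : ∑ ω, μ ω = 1)
    {u v : Ω → ℝ} (hu : ∀ ω, 0 < u ω) (hv : ∀ ω, 0 < v ω)
    {q : ℝ} (hq0 : 0 < q) (hq1 : q < 1) :
    (pexp μ (fun ω => u ω ^ q)) ^ (1/q) * (pexp μ (fun ω => v ω ^ (q/(q-1)))) ^ ((q-1)/q)
      ≤ pexp μ (fun ω => u ω * v ω) := by
  have h1q : 0 < 1 - q := by linarith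
  set P : ℝ := (1 - q)⁻¹ with hP
  have hP1 : 1 ≤ P := by
    rw [hP, le_inv_comm₀]
    · linarith
    · norm_num
    · exact h1q
  have key := inner_le_weight_mul_Lp_of_nonneg (Finset.univ) hP1
    (fun ω => μ ω * (u ω * v ω)) (fun ω => u ω ^ (q-1) * (v ω)⁻¹)
    (fun ω => mul_nonneg (hμpos ω).le (mul_nonneg (hu ω).le (hv ω).le))
    (fun ω => mul_nonneg (Real.rpow_nonneg (hu ω).le _) (inv_nonneg.2 (hv ω).le))
  have e1 : ∑ ω, (fun ω => μ ω * (u ω * v ω)) ω * (fun ω => u ω ^ (q-1) * (v ω)⁻¹) ω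
      = pexp μ (fun ω => u ω ^ q) := by
    refine Finset.sum_congr rfl fun ω _ => ?_
    have : u ω * u ω ^ (q - 1) = u ω ^ q := by
      rw [show u ω * u ω ^ (q-1) = u ω ^ (1:ℝ) * u ω ^ (q-1) from by rw [Real.rpow_one],
        ← Real.rpow_add (hu ω)]
      norm_num
    calc μ ω * (u ω * v ω) * (u ω ^ (q-1) * (v ω)⁻¹)
        = μ ω * (u ω * u ω ^ (q-1)) * (v ω * (v ω)⁻¹) := by ring
      _ = μ ω * u ω ^ q := by rw [this, mul_inv_cancel₀ (hv ω).ne', mul_one]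
  have e2 : ∑ ω, (fun ω => μ ω * (u ω * v ω)) ω = pexp μ (fun ω => u ω * v ω) := rfl
  have e3 : ∑ ω, (fun ω => μ ω * (u ω * v ω)) ω * ((fun ω => u ω ^ (q-1) * (v ω)⁻¹) ω) ^ P
      = pexp μ (fun ω => v ω ^ (q/(q-1))) := by
    refine Finset.sum_congr rfl fun ω _ => ?_
    have hu1 : (u ω ^ (q-1)) ^ P = u ω ^ ((q-1) * P) := by
      rw [← Real.rpow_mul (hu ω).le]
    have hv1 : ((v ω)⁻¹) ^ P = v ω ^ (-P) := by
      rw [← Real.rpow_neg_one (v ω), ← Real.rpow_mul (hv ω).le]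
      norm_num
    have hne : (1:ℝ) - q ≠ 0 := by linarith
    have hne2 : q - 1 ≠ 0 := by linarith
    have hqP : (q - 1) * P = -1 := by
      rw [hP]; field_simp; ring
    have hmul : (u ω ^ (q-1) * (v ω)⁻¹) ^ P = u ω ^ ((q-1)*P) * v ω ^ (-P) := by
      rw [Real.mul_rpow (Real.rpow_nonneg (hu ω).le _) (inv_nonneg.2 (hv ω).le), hu1, hv1]
    rw [hmul, hqP, Real.rpow_neg_one]
    have hvP : v ω * v ω ^ (-P) = v ω ^ (1 - P) := by
      rw [show v ω * v ω ^ (-P) = v ω ^ (1:ℝ) * v ω ^ (-P) from by rw [Real.rpow_one],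
        ← Real.rpow_add (hv ω)]
      ring_nf
    have h1P : 1 - P = q / (q - 1) := by
      rw [hP]
      rw [eq_div_iff hne2, sub_mul]
      have hcanc : (1-q)⁻¹ * (q-1) = -1 := by
        rw [inv_mul_eq_div, div_eq_iff hne]; ring
      rw [hcanc]; ring
    calc μ ω * (u ω * v ω) * ((u ω)⁻¹ * v ω ^ (-P))
        = μ ω * (v ω * v ω ^ (-P)) * (u ω * (u ω)⁻¹) := by ring
      _ = μ ω * v ω ^ (1 - P) := by
          rw [hvP, mul_inv_cancel₀ (hu ω).ne', mul_one]
      _ = μ ω * v ω ^ (q / (q-1)) := by rw [h1P]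
  rw [e1, e2, e3] at key
  have hPinv : P⁻¹ = 1 - q := by rw [hP, inv_inv]
  have hPinv1 : 1 - P⁻¹ = q := by rw [hPinv]; ring
  rw [hPinv1, hPinv] at key
  -- key : X ≤ Y ^ q * Z ^ (1 - q)
  set X := pexp μ (fun ω => u ω ^ q) with hX
  set Y := pexp μ (fun ω => u ω * v ω) with hY
  set Z := pexp μ (fun ω => v ω ^ (q/(q-1))) with hZ
  have hXpos : 0 < X := pexp_pos μ hμpos hμ1 (fun ω => Real.rpow_pos_of_pos (hu ω) _)
  have hYpos : 0 < Y := pexp_pos μ hμpos hμ1 (fun ω => mul_pos (hu ω) (hv ω))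
  have hZpos : 0 < Z := pexp_pos μ hμpos hμ1 (fun ω => Real.rpow_pos_of_pos (hv ω) _)
  have step1 : X ^ (1/q) ≤ Y * Z ^ ((1-q)/q) := by
    have h := Real.rpow_le_rpow hXpos.le key (by positivity : (0:ℝ) ≤ 1/q)
    rw [Real.mul_rpow (Real.rpow_nonneg hYpos.le _) (Real.rpow_nonneg hZpos.le _),
      ← Real.rpow_mul hYpos.le, ← Real.rpow_mul hZpos.le] at h
    rw [show q * (1/q) = 1 from by field_simp, Real.rpow_one] at h
    rw [show (1-q) * (1/q) = (1-q)/q from by ring] at h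
    exact h
  calc X ^ (1/q) * Z ^ ((q-1)/q)
      ≤ (Y * Z ^ ((1-q)/q)) * Z ^ ((q-1)/q) := by
        exact mul_le_mul_of_nonneg_right step1 (Real.rpow_nonneg hZpos.le _)
    _ = Y * (Z ^ ((1-q)/q) * Z ^ ((q-1)/q)) := by ring
    _ = Y := by
        rw [← Real.rpow_add hZpos, show (1-q)/q + (q-1)/q = 0 from by ring, Real.rpow_zero,
          mul_one]

end RevHolder

section Jump

variable [Fintype Ω] [DecidableEq Ω] (μ : Ω → ℝ)

lemma jump (hμpos : ∀ ω, 0 < μ ω) (hμ1 : ∑ ω, μ ω = 1) {h : Ω → ℝ} (hh : ∀ ω, 0 < h ω)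
    {K δ : ℝ} (hK : ∀ ω, |Real.log (h ω)| ≤ K) (hδ : 0 < δ) (hδK : δ * K ≤ 1) :
    Real.log (pexp μ (fun ω => Real.exp (δ * Real.log (h ω)))) / δ - 2 * δ * K ^ 2
      ≤ Real.log (pexp μ (fun ω => Real.exp (-δ * Real.log (h ω)))) / (-δ) := by
  obtain ⟨ω0, _⟩ := univ_nonempty_of_sum μ hμ1
  have hK0 : 0 ≤ K := le_trans (abs_nonneg _) (hK ω0)
  set X := fun ω => Real.log (h ω) with hXdef
  have hEX : |pexp μ X| ≤ K := by
    rw [abs_le]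
    constructor
    · have := pexp_mono μ (fun ω => (hμpos ω).le)
        (fun ω => (neg_le_of_abs_le (hK ω) : -K ≤ X ω))
      rwa [pexp_const μ hμ1 (-K)] at this
    · have := pexp_mono μ (fun ω => (hμpos ω).le)
        (fun ω => (le_of_abs_le (hK ω) : X ω ≤ K))
      rwa [pexp_const μ hμ1 K] at this
  have hbd : ∀ σ : ℝ, |σ| ≤ δ →
      pexp μ (fun ω => Real.exp (σ * X ω)) ≤ 1 + σ * pexp μ X + δ^2 * K^2 := by
    intro σ hσ
    have hpt : ∀ ω, Real.exp (σ * X ω) ≤ 1 + σ * X ω + δ^2 * K^2 := by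
      intro ω
      have habs : |σ * X ω| ≤ 1 := by
        rw [abs_mul]
        calc |σ| * |X ω| ≤ δ * K :=
          mul_le_mul hσ (hK ω) (abs_nonneg _) (le_trans (abs_nonneg _) hσ)
        _ ≤ 1 := hδK
      have := Real.abs_exp_sub_one_sub_id_le habs
      have h2 : (σ * X ω)^2 ≤ δ^2 * K^2 := by
        have : |σ * X ω| ≤ δ * K := by
          rw [abs_mul]
          exact mul_le_mul hσ (hK ω) (abs_nonneg _) (le_trans (abs_nonneg _) hσ)
        nlinarith [abs_nonneg (σ * X ω), sq_abs (σ * X ω)]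
      have h3 := le_of_abs_le this
      nlinarith
    have := pexp_mono μ (fun ω => (hμpos ω).le) hpt
    calc pexp μ (fun ω => Real.exp (σ * X ω))
        ≤ pexp μ (fun ω => 1 + σ * X ω + δ^2*K^2) := this
      _ = 1 + σ * pexp μ X + δ^2 * K^2 := by
          rw [pexp_add μ (fun ω => 1 + σ * X ω) (fun _ => δ^2*K^2),
            pexp_add μ (fun _ => (1:ℝ)) (fun ω => σ * X ω),
            pexp_cmul μ σ X, pexp_const μ hμ1, pexp_const μ hμ1]
  have hE1 := hbd δ (by rw [abs_of_pos hδ])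
  have hE2 := hbd (-δ) (by rw [abs_neg, abs_of_pos hδ])
  set E1 := pexp μ (fun ω => Real.exp (δ * X ω)) with hE1d
  set E2 := pexp μ (fun ω => Real.exp (-δ * X ω)) with hE2d
  have hE1pos : 0 < E1 := pexp_pos μ hμpos hμ1 (fun ω => Real.exp_pos _)
  have hE2pos : 0 < E2 := pexp_pos μ hμpos hμ1 (fun ω => Real.exp_pos _)
  have hprod : E1 * E2 ≤ (1 + δ^2*K^2)^2 := by
    have hA2nn : 0 ≤ 1 + (-δ) * pexp μ X + δ^2*K^2 := by
      have : δ * |pexp μ X| ≤ 1 := le_trans (mul_le_mul_of_nonneg_left hEX hδ.le) hδK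
      have h4 : -δ * pexp μ X ≥ -1 := by
        rcases abs_le.1 hEX with ⟨hl, hr⟩
        nlinarith
      nlinarith
    have := mul_le_mul hE1 hE2 hE2pos.le (by nlinarith [hE1pos, hE1] : (0:ℝ) ≤ 1 + δ * pexp μ X + δ^2*K^2)
    nlinarith [sq_nonneg (pexp μ X), sq_nonneg δ, mul_pos hδ hδ]
  have hlogsum : Real.log E1 + Real.log E2 ≤ 2 * δ^2 * K^2 := by
    rw [← Real.log_mul hE1pos.ne' hE2pos.ne']
    have h5 : Real.log (E1 * E2) ≤ Real.log ((1 + δ^2*K^2)^2) :=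
      Real.log_le_log (mul_pos hE1pos hE2pos) hprod
    have h6 : Real.log ((1 + δ^2*K^2)^2) = 2 * Real.log (1 + δ^2*K^2) := by
      rw [Real.log_pow]; norm_num
    have h7 : Real.log (1 + δ^2*K^2) ≤ δ^2*K^2 := by
      have := Real.log_le_sub_one_of_pos (by positivity : (0:ℝ) < 1 + δ^2*K^2)
      linarith
    linarith
  rw [div_neg, ← sub_nonneg]
  have hfin : Real.log E1 / δ + Real.log E2 / δ ≤ 2 * δ * K^2 := by
    rw [← add_div, div_le_iff₀ hδ]
    nlinarith
  linarith [hfin]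

end Jump


section Flow

variable [Fintype Ω] [DecidableEq Ω] (μ : Ω → ℝ) (L : (Ω → ℝ) →ₗ[ℝ] (Ω → ℝ))

lemma flow_mono (hμpos : ∀ ω, 0 < μ ω) (hμ1 : ∑ ω, μ ω = 1) (hL : IsGen μ L)
    {C : ℝ} (hC : 0 < C) (hLS : LogSob μ L 1 C)
    {g : Ω → ℝ} (hg : ∀ ω, 0 < g ω) {P₁ σ₁ σ₂ : ℝ} (hP1 : P₁ < 1) (h0 : 0 ≤ σ₁)
    (h12 : σ₁ ≤ σ₂)
    (hnz : ∀ s ∈ Set.Icc σ₁ σ₂, (1 - (1 - P₁) * Real.exp ((4/C) * (s - σ₁))) ≠ 0) :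
    Real.log (pexp μ (fun ω => Real.exp (P₁ * Real.log (heat L σ₁ g ω)))) / P₁
      ≤ Real.log (pexp μ (fun ω => Real.exp ((1 - (1 - P₁) * Real.exp ((4/C) * (σ₂ - σ₁))) *
          Real.log (heat L σ₂ g ω)))) /
        (1 - (1 - P₁) * Real.exp ((4/C) * (σ₂ - σ₁))) := by
  set QP : ℝ → ℝ := fun s => 1 - (1 - P₁) * Real.exp ((4/C) * (s - σ₁)) with hQDef
  set QD : ℝ → ℝ := fun s => -(4/C) * (1 - QP s) with hQDdef
  set m : ℝ → ℝ := fun s => ∑ ω, μ ω * Real.exp (QP s * Real.log (heat L s g ω)) with hmdef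
  set md : ℝ → ℝ := fun s => ∑ ω, μ ω * (Real.exp (QP s * Real.log (heat L s g ω)) *
      (QD s * Real.log (heat L s g ω) +
        QP s * (-(L (heat L s g) ω) / heat L s g ω))) with hmddef
  set H : ℝ → ℝ := fun s => Real.log (m s) / QP s with hHdef
  have hQPlt1 : ∀ s, QP s < 1 := by
    intro s
    have : 0 < (1 - P₁) * Real.exp ((4/C) * (s - σ₁)) :=
      mul_pos (by linarith) (Real.exp_pos _)
    simp only [hQDef]
    linarith
  have hQD_neg : ∀ s, QD s < 0 := by
    intro s
    have h1 := hQPlt1 s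
    have h4C : 0 < 4 / C := by positivity
    simp only [hQDdef]
    have h5 : 0 < (4/C) * (1 - QP s) := mul_pos h4C (by linarith)
    linarith
  have hQDeriv : ∀ s, HasDerivAt QP (QD s) s := by
    intro s
    have hlin : HasDerivAt (fun s : ℝ => (4/C) * (s - σ₁)) (4/C) s := by
      simpa using ((hasDerivAt_id s).sub_const σ₁).const_mul (4/C)
    have hexp := hlin.exp
    have h := (hexp.const_mul (1 - P₁)).const_sub 1
    have hval : QD s = -((1 - P₁) * (Real.exp ((4/C) * (s - σ₁)) * (4/C))) := by
      simp only [hQDdef, hQDef]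
      ring
    rw [hval]
    exact h
  have hupos : ∀ s ∈ Set.Icc σ₁ σ₂, ∀ ω, 0 < heat L s g ω := by
    intro s hs ω
    exact heat_pos μ L hL (le_trans h0 hs.1) hg ω
  have hmpos : ∀ s ∈ Set.Icc σ₁ σ₂, 0 < m s := by
    intro s hs
    exact pexp_pos μ hμpos hμ1 (fun ω => Real.exp_pos _)
  have hmderiv : ∀ s ∈ Set.Icc σ₁ σ₂, HasDerivAt m (md s) s := by
    intro s hs
    refine HasDerivAt.fun_sum (fun ω _ => ?_)
    have hu := heat_hasDerivAt L g ω s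
    have hlog := hu.log (hupos s hs ω).ne'
    have hmul := (hQDeriv s).mul hlog
    have hexp := hmul.exp
    exact hexp.const_mul (μ ω)
  have hHderiv : ∀ s ∈ Set.Icc σ₁ σ₂,
      HasDerivAt H ((md s / m s * QP s - Real.log (m s) * QD s) / (QP s)^2) s := by
    intro s hs
    have hlogm := (hmderiv s hs).log (hmpos s hs).ne'
    exact hlogm.div (hQDeriv s) (hnz s hs)
  have hH_nonneg : ∀ s ∈ Set.Icc σ₁ σ₂,
      0 ≤ (md s / m s * QP s - Real.log (m s) * QD s) / (QP s)^2 := by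
    intro s hs
    have hms := hmpos s hs
    have hup := hupos s hs
    -- claim1 : QP s * md s = QD s * E[v * log v] - QP s ^ 2 * dform(...)
    have claim1 : QP s * md s
        = QD s * (∑ ω, μ ω * (Real.exp (QP s * Real.log (heat L s g ω)) * (QP s * Real.log (heat L s g ω))))
          - (QP s)^2 * dform μ L (fun ω => Real.exp ((QP s - 1) * Real.log (heat L s g ω))) (heat L s g) := by
      simp only [hmddef, dform, pexp, Finset.mul_sum, ← Finset.sum_sub_distrib]
      refine Finset.sum_congr rfl fun ω _ => ?_
      have hXe : Real.exp (Real.log (heat L s g ω)) = heat L s g ω := Real.exp_log (hup ω)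
      have hdiv : Real.exp (QP s * Real.log (heat L s g ω)) / heat L s g ω
          = Real.exp ((QP s - 1) * Real.log (heat L s g ω)) := by
        rw [show (QP s - 1) * Real.log (heat L s g ω)
            = QP s * Real.log (heat L s g ω) - Real.log (heat L s g ω) from by ring,
          Real.exp_sub, hXe]
      have h2 : Real.exp (QP s * Real.log (heat L s g ω)) * (-(L (heat L s g) ω) / heat L s g ω)
          = -(Real.exp ((QP s - 1) * Real.log (heat L s g ω)) * L (heat L s g) ω) := by
        calc Real.exp (QP s * Real.log (heat L s g ω)) * (-(L (heat L s g) ω) / heat L s g ω)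
            = -((Real.exp (QP s * Real.log (heat L s g ω)) / heat L s g ω) * L (heat L s g) ω) := by ring
          _ = -(Real.exp ((QP s - 1) * Real.log (heat L s g ω)) * L (heat L s g) ω) := by rw [hdiv]
      linear_combination (μ ω * QP s ^ 2) * h2
    -- claim2 : E[v log v] = entE v + m log m
    have claim2 : (∑ ω, μ ω * (Real.exp (QP s * Real.log (heat L s g ω)) * (QP s * Real.log (heat L s g ω))))
        = entE μ (fun ω => Real.exp (QP s * Real.log (heat L s g ω))) + m s * Real.log (m s) := by
      rw [entE]
      have e1 : (fun ω => Real.exp (QP s * Real.log (heat L s g ω)) * Real.log (Real.exp (QP s * Real.log (heat L s g ω))))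
          = fun ω => Real.exp (QP s * Real.log (heat L s g ω)) * (QP s * Real.log (heat L s g ω)) := by
        funext ω; rw [Real.log_exp]
      rw [e1]
      have e2 : pexp μ (fun ω => Real.exp (QP s * Real.log (heat L s g ω))) = m s := rfl
      have e3 : pexp μ (fun ω => Real.exp (QP s * Real.log (heat L s g ω)) * (QP s * Real.log (heat L s g ω)))
          = ∑ ω, μ ω * (Real.exp (QP s * Real.log (heat L s g ω)) * (QP s * Real.log (heat L s g ω))) := rfl
      rw [e2, e3]
      ring
    -- logSob
    have hQPs1 : QP s < 1 := hQPlt1 s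
    have hQPs0 : QP s ≠ 0 := hnz s hs
    have hent := plogSob μ L hμpos hL hC.le hLS hup hQPs1 hQPs0
    -- hent : entE μ (fun ω => exp (QP s * log u)) ≤ C QP² /(4(QP−1)) * dform (exp((QP−1) log u)) u
    have hfac : QD s * (C * (QP s)^2 / (4 * (QP s - 1))) = (QP s)^2 := by
      have h1 : QP s - 1 ≠ 0 := by have := hQPlt1 s; intro h; linarith [sub_eq_zero.1 h]
      simp only [hQDdef]
      field_simp
      ring
    have hkey : 0 ≤ QP s * md s - QD s * (m s * Real.log (m s)) := by
      rw [claim1, claim2]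
      have hmul := mul_le_mul_of_nonpos_left hent (hQD_neg s).le
      -- hmul : QD * (C QP²/(4(QP−1)) * dform ...) ≤ QD * entE ...
      rw [← mul_assoc, hfac] at hmul
      linarith
    have hnum : 0 ≤ md s / m s * QP s - Real.log (m s) * QD s := by
      have heq : md s / m s * QP s - Real.log (m s) * QD s
          = (QP s * md s - QD s * (m s * Real.log (m s))) / m s := by
        field_simp
      rw [heq]
      exact div_nonneg hkey hms.le
    exact div_nonneg hnum (sq_nonneg _)
  -- monotonicity
  have hmono : MonotoneOn H (Set.Icc σ₁ σ₂) := by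
    refine monotoneOn_of_hasDerivWithinAt_nonneg
      (f' := fun s => (md s / m s * QP s - Real.log (m s) * QD s) / (QP s)^2) (convex_Icc σ₁ σ₂)
      (fun s hs => ((hHderiv s hs).continuousAt).continuousWithinAt)
      (fun s hs => ?_) (fun s hs => ?_)
    · rw [interior_Icc] at hs
      exact ((hHderiv s ⟨hs.1.le, hs.2.le⟩).hasDerivWithinAt)
    · rw [interior_Icc] at hs
      exact hH_nonneg s ⟨hs.1.le, hs.2.le⟩
  have hfinal := hmono (Set.left_mem_Icc.2 h12) (Set.right_mem_Icc.2 h12) h12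
  have hQPσ1 : QP σ₁ = P₁ := by
    simp only [hQDef]
    rw [sub_self, mul_zero, Real.exp_zero, mul_one]
    ring
  have hHσ1 : H σ₁ = Real.log (pexp μ (fun ω =>
      Real.exp (P₁ * Real.log (heat L σ₁ g ω)))) / P₁ := by
    simp only [hHdef, hmdef, hQPσ1, pexp]
  have hHσ2 : H σ₂ = Real.log (pexp μ (fun ω =>
      Real.exp ((1 - (1 - P₁) * Real.exp ((4/C) * (σ₂ - σ₁))) * Real.log (heat L σ₂ g ω)))) /
      (1 - (1 - P₁) * Real.exp ((4/C) * (σ₂ - σ₁))) := by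
    simp only [hHdef, hmdef, hQDef, pexp]
  rw [← hHσ1, ← hHσ2]
  exact hfinal

end Flow


section Chain

variable [Fintype Ω] [DecidableEq Ω] (μ : Ω → ℝ) (L : (Ω → ℝ) →ₗ[ℝ] (Ω → ℝ))

lemma heat_zero (g : Ω → ℝ) : heat L 0 g = g := by
  show NormedSpace.exp ((-(0:ℝ)) • (LinearMap.toContinuousLinearMap L)) g = g
  rw [neg_zero, zero_smul, NormedSpace.exp_zero]
  rfl

lemma rhc_delta (hμpos : ∀ ω, 0 < μ ω) (hμ1 : ∑ ω, μ ω = 1) (hL : IsGen μ L)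
    {C : ℝ} (hC : 0 < C) (hLS : LogSob μ L 1 C)
    {g : Ω → ℝ} (hg : ∀ ω, 0 < g ω) {p t δ K : ℝ}
    (hp0 : 0 < p) (hp1 : p < 1) (ht : 0 < t) (hδ0 : 0 < δ) (hδp : δ < p) (hδ1 : δ < 1)
    (hKg : ∀ (s : ℝ), 0 ≤ s → ∀ ω, |Real.log (heat L s g ω)| ≤ K)
    (hδK : δ * K ≤ 1)
    (hbig : 1 < (1 - p) * Real.exp ((4/C) * t)) :
    Real.log (pexp μ (fun ω => Real.exp (p * Real.log (g ω)))) / p - 2 * δ * K ^ 2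
      ≤ Real.log (pexp μ (fun ω => Real.exp (
          (1 - (1 + δ) * Real.exp ((4/C) * (t - C/4 * Real.log ((1-δ)/(1-p)))))
            * Real.log (heat L t g ω)))) /
        (1 - (1 + δ) * Real.exp ((4/C) * (t - C/4 * Real.log ((1-δ)/(1-p))))) := by
  have h1p : 0 < 1 - p := by linarith
  have h1δ : 0 < 1 - δ := by linarith
  have h4C : 0 < 4/C := by positivity
  have hrpos : 0 < (1-δ)/(1-p) := div_pos h1δ h1p
  set s₁ : ℝ := C/4 * Real.log ((1-δ)/(1-p)) with hs₁def
  have hs₁0 : 0 ≤ s₁ := by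
    apply mul_nonneg (by positivity)
    apply Real.log_nonneg
    rw [le_div_iff₀ h1p]
    linarith
  have hexps₁ : Real.exp ((4/C) * s₁) = (1-δ)/(1-p) := by
    rw [hs₁def, show (4/C) * (C/4 * Real.log ((1-δ)/(1-p))) = Real.log ((1-δ)/(1-p)) from by
      field_simp]
    exact Real.exp_log hrpos
  have hs₁t : s₁ ≤ t := by
    by_contra hcon
    push_neg at hcon
    have h2 : Real.exp ((4/C) * t) < (1-δ)/(1-p) := by
      rw [← hexps₁]
      exact Real.exp_lt_exp.2 (by nlinarith)
    rw [lt_div_iff₀ h1p] at h2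
    nlinarith
  -- Piece 1
  have hnz1 : ∀ s ∈ Set.Icc (0:ℝ) s₁, (1 - (1 - p) * Real.exp ((4/C) * (s - 0))) ≠ 0 := by
    intro s hs
    have h2 : Real.exp ((4/C) * (s - 0)) ≤ (1-δ)/(1-p) := by
      rw [← hexps₁]
      exact Real.exp_le_exp.2 (by nlinarith [hs.2])
    have h3 : (1-p) * Real.exp ((4/C) * (s - 0)) ≤ 1 - δ := by
      calc (1-p) * Real.exp ((4/C) * (s - 0)) ≤ (1-p) * ((1-δ)/(1-p)) :=
            mul_le_mul_of_nonneg_left h2 h1p.le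
        _ = 1 - δ := by rw [mul_comm, div_mul_cancel₀ _ h1p.ne']
    have : 0 < 1 - (1-p) * Real.exp ((4/C) * (s - 0)) := by linarith
    exact this.ne'
  have hflow1 := flow_mono μ L hμpos hμ1 hL hC hLS hg (P₁ := p) (σ₁ := 0) (σ₂ := s₁)
    hp1 le_rfl hs₁0 hnz1
  rw [heat_zero L g] at hflow1
  have hπs₁ : 1 - (1-p) * Real.exp ((4/C) * (s₁ - 0)) = δ := by
    rw [sub_zero, hexps₁, mul_comm, div_mul_cancel₀ _ h1p.ne']
    ring
  rw [hπs₁] at hflow1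
  -- Jump
  have hjump := jump μ hμpos hμ1 (fun ω => heat_pos μ L hL hs₁0 hg ω)
    (fun ω => hKg s₁ hs₁0 ω) hδ0 hδK
  -- Piece 2
  have hnz2 : ∀ s ∈ Set.Icc s₁ t, (1 - (1 - (-δ)) * Real.exp ((4/C) * (s - s₁))) ≠ 0 := by
    intro s hs
    have h2 : (1:ℝ) ≤ Real.exp ((4/C) * (s - s₁)) :=
      Real.one_le_exp (by nlinarith [hs.1])
    have h3 : 1 + δ ≤ (1 - (-δ)) * Real.exp ((4/C) * (s - s₁)) := by
      calc (1:ℝ) + δ = (1 - (-δ)) * 1 := by ring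
        _ ≤ (1 - (-δ)) * Real.exp ((4/C) * (s - s₁)) :=
            mul_le_mul_of_nonneg_left h2 (by linarith)
    have : 1 - (1 - (-δ)) * Real.exp ((4/C) * (s - s₁)) < 0 := by linarith
    exact this.ne
  have hflow2 := flow_mono μ L hμpos hμ1 hL hC hLS hg (P₁ := -δ) (σ₁ := s₁) (σ₂ := t)
    (by linarith) hs₁0 hs₁t hnz2
  rw [show (1:ℝ) - (-δ) = 1 + δ from by ring] at hflow2
  linarith [hflow1, hjump, hflow2]

end Chain


section TwoFn

variable [Fintype Ω] [DecidableEq Ω] (μ : Ω → ℝ) (L : (Ω → ℝ) →ₗ[ℝ] (Ω → ℝ))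

lemma two_fn (hμpos : ∀ ω, 0 < μ ω) (hμ1 : ∑ ω, μ ω = 1) (hL : IsGen μ L)
    {C : ℝ} (hC : 0 < C) (hLS : LogSob μ L 1 C)
    {f g : Ω → ℝ} (hf : ∀ ω, 0 < f ω) (hg : ∀ ω, 0 < g ω)
    {p q t : ℝ} (hp0 : 0 < p) (hp1 : p < 1) (hq0 : 0 < q) (hq1 : q < 1) (ht : 0 < t)
    (hpq : (1 - p) * (1 - q) * Real.exp ((4/C) * t) = 1) :
    Real.exp (Real.log (pexp μ (fun ω => Real.exp (q * Real.log (f ω)))) / q)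
      * Real.exp (Real.log (pexp μ (fun ω => Real.exp (p * Real.log (g ω)))) / p)
      ≤ pexp μ (fun ω => f ω * heat L t g ω) := by
  have hne := univ_nonempty_of_sum μ hμ1
  have h1p : 0 < 1 - p := by linarith
  have h1q : 0 < 1 - q := by linarith
  have hE4pos : 0 < Real.exp ((4/C) * t) := Real.exp_pos _
  set K : ℝ := max |Real.log (Finset.univ.inf' hne g)| |Real.log (Finset.univ.sup' hne g)|
    with hKdef
  have hK0 : 0 ≤ K := le_trans (abs_nonneg _) (le_max_left _ _)
  have hKg : ∀ (s : ℝ), 0 ≤ s → ∀ ω, |Real.log (heat L s g ω)| ≤ K := fun s hs ω =>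
    log_heat_bound μ L hL hs hg hne ω
  have hbig : 1 < (1 - p) * Real.exp ((4/C) * t) := by
    have hpos : 0 < (1 - p) * Real.exp ((4/C) * t) := by positivity
    nlinarith
  have hTgpos : ∀ ω, 0 < heat L t g ω := fun ω => heat_pos μ L hL ht.le hg ω
  have hE4val : Real.exp ((4/C) * t) = 1 / ((1-p) * (1-q)) := by
    rw [eq_div_iff (by positivity : ((1:ℝ)-p) * (1-q) ≠ 0)]
    linear_combination hpq
  -- the key δ-family bound
  have key : ∀ δ : ℝ, 0 < δ → δ < p → δ < 1 → δ * K ≤ 1 →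
      Real.exp (Real.log (pexp μ (fun ω =>
          Real.exp ((1 - (1-δ)*(1-q)/(1+δ)) * Real.log (f ω)))) / (1 - (1-δ)*(1-q)/(1+δ)))
        * Real.exp (Real.log (pexp μ (fun ω => Real.exp (p * Real.log (g ω)))) / p
            - 2*δ*K^2)
      ≤ pexp μ (fun ω => f ω * heat L t g ω) := by
    intro δ hδ0 hδp hδ1 hδK
    have h1δ : 0 < 1 - δ := by linarith
    have h1δp : 0 < 1 + δ := by linarith
    set qδ : ℝ := 1 - (1-δ)*(1-q)/(1+δ) with hqδdef
    have hfrac : 0 < (1-δ)*(1-q)/(1+δ) := by positivity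
    have hfrac1 : (1-δ)*(1-q)/(1+δ) < 1 := by
      rw [div_lt_one h1δp]; nlinarith
    have hqδ0 : 0 < qδ := by rw [hqδdef]; linarith
    have hqδ1 : qδ < 1 := by rw [hqδdef]; linarith
    have hrhc := rhc_delta μ L hμpos hμ1 hL hC hLS hg hp0 hp1 ht hδ0 hδp hδ1 hKg hδK hbig
    set Q : ℝ := 1 - (1 + δ) * Real.exp ((4/C) * (t - C/4 * Real.log ((1-δ)/(1-p))))
      with hQdef
    have hrfrac : 0 < (1-δ)/(1-p) := div_pos h1δ h1p
    have hexps₁ : Real.exp ((4/C) * (C/4 * Real.log ((1-δ)/(1-p)))) = (1-δ)/(1-p) := by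
      rw [show (4/C) * (C/4 * Real.log ((1-δ)/(1-p))) = Real.log ((1-δ)/(1-p)) from by
        field_simp]
      exact Real.exp_log hrfrac
    have hQval : 1 - Q = (1+δ)/((1-δ)*(1-q)) := by
      rw [hQdef, show (4/C) * (t - C/4 * Real.log ((1-δ)/(1-p)))
          = (4/C)*t - (4/C)*(C/4 * Real.log ((1-δ)/(1-p))) from by ring,
        Real.exp_sub, hexps₁, hE4val]
      field_simp
      ring
    have hQneg : Q < 0 := by
      have h5 : (1-δ)*(1-q) < 1 + δ := by nlinarith
      have h6 : 1 < (1+δ)/((1-δ)*(1-q)) := (one_lt_div (by positivity)).2 h5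
      have h7 : 1 < 1 - Q := hQval ▸ h6
      linarith
    have hconj : qδ/(qδ-1) = Q := by
      have h6 : 1 - qδ = (1-δ)*(1-q)/(1+δ) := by rw [hqδdef]; ring
      have h7 : qδ - 1 ≠ 0 := by intro h; have := sub_eq_zero.1 h; linarith [hqδ1]
      have h7' : 1 - qδ ≠ 0 := by intro h; have := sub_eq_zero.1 h; linarith [hqδ1]
      have h8 : qδ/(qδ-1) = 1 - 1/(1-qδ) := by
        field_simp
        ring
      rw [h8, h6, one_div_div, ← hQval]
      ring
    -- reverse Hölder
    have hrh := rev_holder μ hμpos hμ1 hf hTgpos hqδ0 hqδ1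
    rw [hconj] at hrh
    have hinvQ : (qδ-1)/qδ = 1/Q := by
      rw [← hconj, one_div_div]
    rw [hinvQ] at hrh
    -- convert rpow to exp/log
    have hXeq : (fun ω => f ω ^ qδ) = (fun ω => Real.exp (qδ * Real.log (f ω))) :=
      funext fun ω => by rw [Real.rpow_def_of_pos (hf ω), mul_comm]
    have hZeq : (fun ω => heat L t g ω ^ Q) =
        (fun ω => Real.exp (Q * Real.log (heat L t g ω))) :=
      funext fun ω => by rw [Real.rpow_def_of_pos (hTgpos ω), mul_comm]
    rw [hXeq, hZeq] at hrh
    set X : ℝ := pexp μ (fun ω => Real.exp (qδ * Real.log (f ω))) with hXdef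
    set Z : ℝ := pexp μ (fun ω => Real.exp (Q * Real.log (heat L t g ω))) with hZdef
    have hXpos : 0 < X := pexp_pos μ hμpos hμ1 (fun ω => Real.exp_pos _)
    have hZpos : 0 < Z := pexp_pos μ hμpos hμ1 (fun ω => Real.exp_pos _)
    have hX2 : X ^ (1/qδ) = Real.exp (Real.log X / qδ) := by
      rw [Real.rpow_def_of_pos hXpos, mul_one_div]
    have hZ2 : Z ^ (1/Q) = Real.exp (Real.log Z / Q) := by
      rw [Real.rpow_def_of_pos hZpos, mul_one_div]
    rw [hX2, hZ2] at hrh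
    -- combine with hrhc
    refine le_trans ?_ hrh
    have hstep : Real.exp (Real.log (pexp μ (fun ω => Real.exp (p * Real.log (g ω)))) / p
        - 2*δ*K^2) ≤ Real.exp (Real.log Z / Q) :=
      Real.exp_le_exp.2 hrhc
    exact mul_le_mul_of_nonneg_left hstep (Real.exp_pos _).le
  -- now take δ → 0⁺
  set Ep : ℝ := pexp μ (fun ω => Real.exp (p * Real.log (g ω))) with hEpdef
  set Xq : ℝ := pexp μ (fun ω => Real.exp (q * Real.log (f ω))) with hXqdef
  have hXqpos : 0 < Xq := pexp_pos μ hμpos hμ1 (fun ω => Real.exp_pos _)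
  have ht1 : Filter.Tendsto (fun δ : ℝ => 1 - (1-δ)*(1-q)/(1+δ)) (nhds 0) (nhds q) := by
    have hc : ContinuousAt (fun δ : ℝ => 1 - (1-δ)*(1-q)/(1+δ)) 0 := by
      apply ContinuousAt.sub continuousAt_const
      exact ContinuousAt.div (by fun_prop) (by fun_prop) (by norm_num)
    convert hc.tendsto using 2
    norm_num
  have ht2 : Filter.Tendsto (fun δ : ℝ => pexp μ (fun ω =>
      Real.exp ((1 - (1-δ)*(1-q)/(1+δ)) * Real.log (f ω)))) (nhds 0) (nhds Xq) := by
    rw [hXqdef]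
    show Filter.Tendsto (fun δ : ℝ => ∑ ω, μ ω *
      Real.exp ((1 - (1-δ)*(1-q)/(1+δ)) * Real.log (f ω))) (nhds 0)
      (nhds (∑ ω, μ ω * Real.exp (q * Real.log (f ω))))
    refine tendsto_finset_sum _ (fun ω _ => ?_)
    refine Filter.Tendsto.const_mul _ ?_
    exact (Real.continuous_exp.tendsto _).comp (ht1.mul_const _)
  have ht3 : Filter.Tendsto (fun δ : ℝ =>
      Real.exp (Real.log (pexp μ (fun ω =>
        Real.exp ((1 - (1-δ)*(1-q)/(1+δ)) * Real.log (f ω)))) / (1 - (1-δ)*(1-q)/(1+δ)))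
      * Real.exp (Real.log Ep / p - 2*δ*K^2)) (nhds 0)
      (nhds (Real.exp (Real.log Xq / q) * Real.exp (Real.log Ep / p))) := by
    refine Filter.Tendsto.mul ?_ ?_
    · refine (Real.continuous_exp.tendsto _).comp ?_
      refine Filter.Tendsto.div ?_ ht1 hq0.ne'
      exact ((Real.continuousAt_log hXqpos.ne').tendsto).comp ht2
    · refine (Real.continuous_exp.tendsto _).comp ?_
      have hsub : Filter.Tendsto (fun δ : ℝ => 2*δ*K^2) (nhds 0) (nhds 0) := by
        have hcc : Continuous (fun δ : ℝ => 2*δ*K^2) := by fun_prop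
        have := hcc.tendsto 0
        norm_num at this
        exact this
      have := Filter.Tendsto.sub (tendsto_const_nhds
        (x := Real.log Ep / p) (f := nhds (0:ℝ))) hsub
      norm_num at this
      exact this
  have hev : ∀ᶠ δ in nhdsWithin 0 (Set.Ioi (0:ℝ)),
      Real.exp (Real.log (pexp μ (fun ω =>
        Real.exp ((1 - (1-δ)*(1-q)/(1+δ)) * Real.log (f ω)))) / (1 - (1-δ)*(1-q)/(1+δ)))
      * Real.exp (Real.log Ep / p - 2*δ*K^2)
      ≤ pexp μ (fun ω => f ω * heat L t g ω) := by
    have hδ₀pos : 0 < min p (1/(K+1)) := by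
      apply lt_min hp0
      positivity
    filter_upwards [Ioo_mem_nhdsGT_of_mem (Set.left_mem_Ico.2 hδ₀pos)] with δ hδ
    obtain ⟨hδ0, hδlt⟩ := hδ
    have hδp : δ < p := lt_of_lt_of_le hδlt (min_le_left _ _)
    have hδK1 : δ < 1/(K+1) := lt_of_lt_of_le hδlt (min_le_right _ _)
    have hδ1 : δ < 1 := by
      have : (1:ℝ)/(K+1) ≤ 1 := by
        rw [div_le_one (by linarith)]
        linarith
      linarith
    have hδK : δ * K ≤ 1 := by
      have h9 : δ * (K+1) < 1 := (lt_div_iff₀ (show (0:ℝ) < K+1 by linarith)).1 hδK1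
      nlinarith
    exact key δ hδ0 hδp hδ1 hδK
  exact le_of_tendsto (ht3.mono_left nhdsWithin_le_nhds) hev

end TwoFn


section Main

variable [Fintype Ω] [DecidableEq Ω] (μ : Ω → ℝ) (L : (Ω → ℝ) →ₗ[ℝ] (Ω → ℝ))

lemma pexp_ind (D : Finset Ω) :
    pexp μ (fun ω => if ω ∈ D then (1:ℝ) else 0) = ∑ ω ∈ D, μ ω := by
  simp only [pexp, mul_ite, mul_one, mul_zero]
  rw [Finset.sum_ite_mem, Finset.univ_inter]

lemma heat_ind_shift (hL : IsGen μ L) (t ε : ℝ) (D : Finset Ω) (ω : Ω) :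
    heat L t (fun ω' => (if ω' ∈ D then (1:ℝ) else 0) + ε) ω
      = heat L t (fun ω' => if ω' ∈ D then (1:ℝ) else 0) ω + ε := by
  have h1 : (fun ω' => (if ω' ∈ D then (1:ℝ) else 0) + ε)
      = (fun ω' => if ω' ∈ D then (1:ℝ) else 0) + ε • (fun _ => (1:ℝ)) := by
    funext x; simp [smul_eq_mul]
  rw [h1]
  show (NormedSpace.exp ((-t) • (LinearMap.toContinuousLinearMap L)))
    ((fun ω' => if ω' ∈ D then (1:ℝ) else 0) + ε • (fun _ => (1:ℝ))) ω = _
  rw [map_add, map_smul]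
  have h2 : (NormedSpace.exp ((-t) • (LinearMap.toContinuousLinearMap L)))
      (fun _ => (1:ℝ)) ω = 1 := heat_one μ L hL t ω
  simp only [Pi.add_apply, Pi.smul_apply, smul_eq_mul]
  rw [h2, mul_one]
  rfl

lemma ind_tendsto (hμpos : ∀ ω, 0 < μ ω) (D : Finset Ω) {e : ℝ} (he : 0 < e) :
    Filter.Tendsto (fun ε : ℝ => pexp μ (fun ω =>
        Real.exp (e * Real.log ((if ω ∈ D then (1:ℝ) else 0) + ε))))
      (nhdsWithin 0 (Set.Ioi 0)) (nhds (∑ ω ∈ D, μ ω)) := by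
  have hval : ∑ ω ∈ D, μ ω = ∑ ω, (if ω ∈ D then μ ω else 0) := by
    rw [Finset.sum_ite_mem, Finset.univ_inter]
  rw [hval]
  show Filter.Tendsto (fun ε : ℝ => ∑ ω, μ ω *
      Real.exp (e * Real.log ((if ω ∈ D then (1:ℝ) else 0) + ε))) _ _
  refine tendsto_finset_sum _ (fun ω _ => ?_)
  by_cases hω : ω ∈ D
  · simp only [hω, if_true]
    have h1 : Filter.Tendsto (fun ε : ℝ => (1:ℝ) + ε) (nhds 0) (nhds 1) := by
      have h0 := ((continuous_const (y := (1:ℝ))).add continuous_id).tendsto (0:ℝ)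
      norm_num at h0
      exact h0
    have h2 : Filter.Tendsto (fun ε : ℝ => Real.log (1 + ε)) (nhds 0) (nhds 0) := by
      have := ((Real.continuousAt_log (by norm_num : (1:ℝ) ≠ 0)).tendsto).comp h1
      rw [Real.log_one] at this
      exact this
    have h3 : Filter.Tendsto (fun ε : ℝ => Real.exp (e * Real.log (1 + ε)))
        (nhds 0) (nhds 1) := by
      have h2' := h2.const_mul e
      rw [mul_zero] at h2'
      have h5 := (Real.continuous_exp.tendsto 0).comp h2'
      rw [Real.exp_zero] at h5
      exact h5
    have h4 := h3.const_mul (μ ω)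
    rw [mul_one] at h4
    exact h4.mono_left nhdsWithin_le_nhds
  · simp only [hω, if_false]
    have h1 : Filter.Tendsto (fun ε : ℝ => Real.log ((0:ℝ) + ε))
        (nhdsWithin 0 (Set.Ioi 0)) Filter.atBot := by
      simpa using Real.tendsto_log_nhdsGT_zero
    have h2 : Filter.Tendsto (fun ε : ℝ => e * Real.log ((0:ℝ) + ε))
        (nhdsWithin 0 (Set.Ioi 0)) Filter.atBot := by
      exact Filter.Tendsto.const_mul_atBot he h1
    have h3 := Real.tendsto_exp_atBot.comp h2
    have h4 := h3.const_mul (μ ω)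
    rw [mul_zero] at h4
    simpa [Function.comp] using h4

end Main

/-- mixing bound for big sets under the `1`-logSob inequality. -/
theorem mixing_big_sets [DecidableEq Ω] [Fintype Ω] (μ : Ω → ℝ)
    (hμpos : ∀ ω, 0 < μ ω) (hμ1 : ∑ ω, μ ω = 1)
    (L : (Ω → ℝ) →ₗ[ℝ] (Ω → ℝ)) (hL : IsGen μ L)
    (C : ℝ) (hC : 0 < C) (hLS : LogSob μ L 1 C)
    (a b : ℝ) (ha : 0 ≤ a) (hb : 0 ≤ b) (t : ℝ) (ht : 0 < t)
    (A B : Finset Ω)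
    (hA : ∑ ω ∈ A, μ ω = Real.exp (-(a ^ 2) / 2))
    (hB : ∑ ω ∈ B, μ ω = Real.exp (-(b ^ 2) / 2)) :
    Real.exp (-(1 / 2) * ((a ^ 2 + 2 * Real.exp (-2 * t / C) * a * b + b ^ 2) /
        (1 - Real.exp (-4 * t / C)))) ≤
      pexp μ (fun ω => (if ω ∈ A then (1 : ℝ) else 0) *
        heat L t (fun ω' => if ω' ∈ B then (1 : ℝ) else 0) ω) := by
  set r : ℝ := Real.exp (-2 * t / C) with hrdef
  have hr0 : 0 < r := Real.exp_pos _
  have hr1 : r < 1 := by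
    have h1 : (-2) * t / C < 0 := div_neg_of_neg_of_pos (by linarith) hC
    calc r = Real.exp (-2 * t / C) := hrdef
      _ < Real.exp 0 := Real.exp_lt_exp.2 h1
      _ = 1 := Real.exp_zero
  have hrr : r * r = Real.exp (-4 * t / C) := by
    rw [hrdef, ← Real.exp_add]
    congr 1
    ring
  have hr2 : 0 < 1 - r ^ 2 := by nlinarith
  rw [show (1:ℝ) - Real.exp (-4 * t / C) = 1 - r ^ 2 from by rw [← hrr]; ring]
  have huniv_of_sum_one : ∀ D : Finset Ω, ∑ ω ∈ D, μ ω = 1 → D = Finset.univ := by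
    intro D hD
    by_contra hne2
    have hss : D ⊂ Finset.univ := (Finset.subset_univ D).ssubset_of_ne hne2
    obtain ⟨x, _, hxD⟩ := Finset.exists_of_ssubset hss
    have hlt := Finset.sum_lt_sum_of_subset (Finset.subset_univ D) (Finset.mem_univ x) hxD
      (hμpos x) (fun i _ _ => (hμpos i).le)
    rw [hμ1, hD] at hlt
    exact lt_irrefl _ hlt
  rcases eq_or_lt_of_le hb with hb0 | hbpos
  · -- b = 0
    have hb0' : b = 0 := hb0.symm
    subst hb0'
    norm_num at hB
    have hBuniv : B = Finset.univ := huniv_of_sum_one B hB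
    have hind1 : (fun ω' => if ω' ∈ B then (1:ℝ) else 0) = fun _ => (1:ℝ) := by
      funext x; simp [hBuniv]
    rw [hind1]
    have hfun : (fun ω => (if ω ∈ A then (1:ℝ) else 0) * heat L t (fun _ => (1:ℝ)) ω)
        = fun ω => if ω ∈ A then (1:ℝ) else 0 := by
      funext ω; rw [heat_one μ L hL t ω, mul_one]
    rw [hfun, pexp_ind μ A, hA]
    apply Real.exp_le_exp.2
    have h1 : a ^ 2 + 2 * r * a * 0 + 0 ^ 2 = a ^ 2 := by ring
    rw [h1]
    have h2 : a ^ 2 ≤ a ^ 2 / (1 - r ^ 2) := by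
      rw [le_div_iff₀ hr2]
      nlinarith [sq_nonneg a, sq_nonneg r]
    linarith
  rcases eq_or_lt_of_le ha with ha0 | hapos
  · -- a = 0
    have ha0' : a = 0 := ha0.symm
    subst ha0'
    norm_num at hA
    have hAuniv : A = Finset.univ := huniv_of_sum_one A hA
    have hfun : (fun ω => (if ω ∈ A then (1:ℝ) else 0) *
        heat L t (fun ω' => if ω' ∈ B then (1:ℝ) else 0) ω)
        = heat L t (fun ω' => if ω' ∈ B then (1:ℝ) else 0) := by
      funext ω; simp [hAuniv]
    rw [hfun, pexp_heat μ L hL t _, pexp_ind μ B, hB]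
    apply Real.exp_le_exp.2
    have h1 : 0 ^ 2 + 2 * r * 0 * b + b ^ 2 = b ^ 2 := by ring
    rw [h1]
    have h2 : b ^ 2 ≤ b ^ 2 / (1 - r ^ 2) := by
      rw [le_div_iff₀ hr2]
      nlinarith [sq_nonneg b, sq_nonneg r]
    linarith
  -- main case : 0 < a, 0 < b
  have hden1 : 0 < a + r * b := by positivity
  have hden2 : 0 < r * a + b := by positivity
  set q : ℝ := a * (1 - r ^ 2) / (a + r * b) with hqdef
  set p : ℝ := b * (1 - r ^ 2) / (r * a + b) with hpdef
  have hq0 : 0 < q := div_pos (mul_pos hapos hr2) hden1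
  have hp0 : 0 < p := div_pos (mul_pos hbpos hr2) hden2
  have hq1 : q < 1 := by
    rw [hqdef, div_lt_one hden1]
    nlinarith
  have hp1 : p < 1 := by
    rw [hpdef, div_lt_one hden2]
    nlinarith
  have h1q : 1 - q = r * (b + r * a) / (a + r * b) := by
    rw [hqdef]
    field_simp
    ring
  have h1p : 1 - p = r * (a + r * b) / (r * a + b) := by
    rw [hpdef]
    field_simp
    ring
  have hprod : (1 - p) * (1 - q) = r ^ 2 := by
    rw [h1p, h1q]
    field_simp
    ring
  have hexp4 : Real.exp ((4/C) * t) * (r * r) = 1 := by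
    rw [hrr, ← Real.exp_add, show (4/C) * t + (-4 * t / C) = 0 from by ring, Real.exp_zero]
  have hpq : (1 - p) * (1 - q) * Real.exp ((4/C) * t) = 1 := by
    rw [hprod]
    linear_combination hexp4
  have hfpos : ∀ (D : Finset Ω) (ε : ℝ), 0 < ε → ∀ ω : Ω,
      (0:ℝ) < (if ω ∈ D then (1:ℝ) else 0) + ε := by
    intro D ε hε ω
    have : (0:ℝ) ≤ if ω ∈ D then (1:ℝ) else 0 := by split <;> norm_num
    linarith
  have key : ∀ ε : ℝ, 0 < ε →
      Real.exp (Real.log (pexp μ (fun ω =>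
          Real.exp (q * Real.log ((if ω ∈ A then (1:ℝ) else 0) + ε)))) / q)
        * Real.exp (Real.log (pexp μ (fun ω =>
          Real.exp (p * Real.log ((if ω ∈ B then (1:ℝ) else 0) + ε)))) / p)
      ≤ pexp μ (fun ω => ((if ω ∈ A then (1:ℝ) else 0) + ε) *
          heat L t (fun ω' => (if ω' ∈ B then (1:ℝ) else 0) + ε) ω) := by
    intro ε hε
    exact two_fn μ L hμpos hμ1 hL hC hLS (hfpos A ε hε) (hfpos B ε hε)
      hp0 hp1 hq0 hq1 ht hpq
  -- limits
  have hl1 := ind_tendsto μ hμpos A hq0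
  rw [hA] at hl1
  have hl2 := ind_tendsto μ hμpos B hp0
  rw [hB] at hl2
  have hl1' : Filter.Tendsto (fun ε : ℝ => Real.exp (Real.log (pexp μ (fun ω =>
      Real.exp (q * Real.log ((if ω ∈ A then (1:ℝ) else 0) + ε)))) / q))
      (nhdsWithin 0 (Set.Ioi 0)) (nhds (Real.exp (-(a ^ 2) / 2 / q))) := by
    have hstep := ((Real.continuousAt_log (Real.exp_pos _).ne').tendsto).comp hl1
    rw [Real.log_exp] at hstep
    exact (Real.continuous_exp.tendsto _).comp (hstep.div_const q)
  have hl2' : Filter.Tendsto (fun ε : ℝ => Real.exp (Real.log (pexp μ (fun ω =>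
      Real.exp (p * Real.log ((if ω ∈ B then (1:ℝ) else 0) + ε)))) / p))
      (nhdsWithin 0 (Set.Ioi 0)) (nhds (Real.exp (-(b ^ 2) / 2 / p))) := by
    have hstep := ((Real.continuousAt_log (Real.exp_pos _).ne').tendsto).comp hl2
    rw [Real.log_exp] at hstep
    exact (Real.continuous_exp.tendsto _).comp (hstep.div_const p)
  have hrw : (fun ε : ℝ => pexp μ (fun ω => ((if ω ∈ A then (1:ℝ) else 0) + ε) *
      heat L t (fun ω' => (if ω' ∈ B then (1:ℝ) else 0) + ε) ω))
      = fun ε : ℝ => ∑ ω, μ ω * (((if ω ∈ A then (1:ℝ) else 0) + ε) *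
        (heat L t (fun ω' => if ω' ∈ B then (1:ℝ) else 0) ω + ε)) := by
    funext ε
    refine Finset.sum_congr rfl fun ω _ => ?_
    dsimp only
    rw [heat_ind_shift μ L hL t ε B ω]
  have hrhs : Filter.Tendsto (fun ε : ℝ => pexp μ (fun ω =>
      ((if ω ∈ A then (1:ℝ) else 0) + ε) *
      heat L t (fun ω' => (if ω' ∈ B then (1:ℝ) else 0) + ε) ω))
      (nhdsWithin 0 (Set.Ioi 0))
      (nhds (pexp μ (fun ω => (if ω ∈ A then (1 : ℝ) else 0) *
        heat L t (fun ω' => if ω' ∈ B then (1 : ℝ) else 0) ω))) := by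
    rw [hrw]
    refine Filter.Tendsto.mono_left ?_ nhdsWithin_le_nhds
    show Filter.Tendsto _ (nhds 0) (nhds (∑ ω, μ ω * ((if ω ∈ A then (1 : ℝ) else 0) *
        heat L t (fun ω' => if ω' ∈ B then (1 : ℝ) else 0) ω)))
    refine tendsto_finset_sum _ (fun ω _ => ?_)
    have h3 : Filter.Tendsto (fun ε : ℝ => (((if ω ∈ A then (1:ℝ) else 0) + ε) *
        (heat L t (fun ω' => if ω' ∈ B then (1:ℝ) else 0) ω + ε))) (nhds 0)
        (nhds (((if ω ∈ A then (1:ℝ) else 0) + 0) *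
          (heat L t (fun ω' => if ω' ∈ B then (1:ℝ) else 0) ω + 0))) :=
      (tendsto_const_nhds.add Filter.tendsto_id).mul (tendsto_const_nhds.add Filter.tendsto_id)
    rw [add_zero, add_zero] at h3
    exact h3.const_mul (μ ω)
  have hev : ∀ᶠ ε in nhdsWithin 0 (Set.Ioi (0:ℝ)),
      Real.exp (Real.log (pexp μ (fun ω =>
          Real.exp (q * Real.log ((if ω ∈ A then (1:ℝ) else 0) + ε)))) / q)
        * Real.exp (Real.log (pexp μ (fun ω =>
          Real.exp (p * Real.log ((if ω ∈ B then (1:ℝ) else 0) + ε)))) / p)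
      ≤ pexp μ (fun ω => ((if ω ∈ A then (1:ℝ) else 0) + ε) *
          heat L t (fun ω' => (if ω' ∈ B then (1:ℝ) else 0) + ε) ω) := by
    filter_upwards [self_mem_nhdsWithin] with ε hε
    exact key ε hε
  have hfinal := le_of_tendsto_of_tendsto (hl1'.mul hl2') hrhs hev
  refine le_trans (le_of_eq ?_) hfinal
  rw [← Real.exp_add]
  congr 1
  rw [hqdef, hpdef]
  have hne1 : a + r * b ≠ 0 := hden1.ne'
  have hne2 : r * a + b ≠ 0 := hden2.ne'
  have hne3 : (1:ℝ) - r ^ 2 ≠ 0 := hr2.ne'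
  have hnea : a ≠ 0 := hapos.ne'
  have hneb : b ≠ 0 := hbpos.ne'
  field_simp
  ring

end
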